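/- Let d = 1 and Ω = [−3,3] ⊂ ℝ, and endow the set P(Ω) of Borel probability measures on Ω with the 1-Wasserstein topology. There exists a continuous, support-preserving map f : P(Ω) → P(Ω) such that there does not exist any continuous map G : P(Ω) × Ω → Ω with f(μ) = G(μ,·)_# μ for all μ ∈ P(Ω). -/

import Mathlib

open MeasureTheory Filter Set
open scoped ENNReal

/-- The 1-Wasserstein distance, via Kantorovich–Rubinstein duality. -/
noncomputable def W1 {E : Type*} [MeasurableSpace E] [PseudoMetricSpace E]
    (μ ν : Measure E) : ℝ :=
  ⨆ φ : {φ : E → ℝ // LipschitzWith 1 φ}, ((∫ x, φ.1 x ∂μ) - ∫ x, φ.1 x ∂ν)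

/-- `P(Ω)`: the Borel probability measures supported in `Ω`. -/
def ProbOn {E : Type*} [MeasurableSpace E] (Ω : Set E) : Set (Measure E) :=
  {μ | IsProbabilityMeasure μ ∧ μ Ωᶜ = 0}

/-- A map `f : P(Ω) → P(Ω)` is support-preserving: for all `x₁, …, xₙ ∈ Ω`, writing
`μ = ∑ (1/n) δ_{xᵢ}`, we have `f(μ) = ∑ (1/n) δ_{yᵢ}` for some `y₁, …, yₙ ∈ Ω` with
`xⱼ = xᵢ → yⱼ = yᵢ`. -/
def SupportPreservingProb {E : Type*} [MeasurableSpace E]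
    (Ω : Set E) (f : Measure E → Measure E) : Prop :=
  ∀ n : ℕ, 0 < n → ∀ x : Fin n → E, (∀ i, x i ∈ Ω) →
    ∃ y : Fin n → E, (∀ i, y i ∈ Ω) ∧
      f (∑ i, ((n : ℝ≥0∞))⁻¹ • Measure.dirac (x i))
        = ∑ i, ((n : ℝ≥0∞))⁻¹ • Measure.dirac (y i) ∧
      ∀ i j, x i = x j → y i = y j

namespace W1Proof

/-! ### Real preliminaries -/

noncomputable def cl01 (r : ℝ) : ℝ := max 0 (min 1 r)

lemma cl01_nonneg (r : ℝ) : 0 ≤ cl01 r := le_max_left _ _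
lemma cl01_le_one (r : ℝ) : cl01 r ≤ 1 := by
  unfold cl01
  rcases le_or_gt r 1 with h | h
  · exact max_le zero_le_one (min_le_left _ _)
  · simp [min_eq_left h.le]
lemma cl01_eq_one {r : ℝ} (h : 1 ≤ r) : cl01 r = 1 := by
  unfold cl01; rw [min_eq_left h]; exact max_eq_right zero_le_one
lemma cl01_eq_zero {r : ℝ} (h : r ≤ 0) : cl01 r = 0 := by
  unfold cl01; rw [min_eq_right (h.trans zero_le_one)]; exact max_eq_left h
lemma cl01_mono {a b : ℝ} (h : a ≤ b) : cl01 a ≤ cl01 b :=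
  max_le_max le_rfl (min_le_min le_rfl h)
lemma abs_cl01_sub (a b : ℝ) : |cl01 a - cl01 b| ≤ |a - b| := by
  unfold cl01
  calc |max 0 (min 1 a) - max 0 (min 1 b)| ≤ |min 1 a - min 1 b| := by
        simpa [max_comm] using abs_max_sub_max_le_abs (min 1 a) (min 1 b) 0
    _ ≤ |a - b| := by
        simpa [min_comm, abs_sub_comm a b] using abs_min_sub_min_le_max 1 a 1 b
lemma cl01_continuous : Continuous cl01 := by
  unfold cl01; fun_prop

noncomputable def cl3 (r : ℝ) : ℝ := max (-3) (min 3 r)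

lemma cl3_mem (r : ℝ) : cl3 r ∈ Set.Icc (-3 : ℝ) 3 := by
  constructor
  · exact le_max_left _ _
  · unfold cl3
    rcases le_or_gt r 3 with h | h
    · exact max_le (by norm_num) (min_le_left _ _)
    · simp [min_eq_left h.le]
lemma abs_cl3_le (r : ℝ) : |cl3 r| ≤ 3 := by
  have h := cl3_mem r
  rw [abs_le]; exact ⟨h.1, h.2⟩
lemma abs_cl3_sub (a b : ℝ) : |cl3 a - cl3 b| ≤ |a - b| := by
  unfold cl3
  calc |max (-3) (min 3 a) - max (-3) (min 3 b)| ≤ |min 3 a - min 3 b| := by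
        simpa [max_comm] using abs_max_sub_max_le_abs (min 3 a) (min 3 b) (-3)
    _ ≤ |a - b| := by
        simpa [min_comm, abs_sub_comm a b] using abs_min_sub_min_le_max 3 a 3 b
lemma cl3_continuous : Continuous cl3 := by
  unfold cl3; fun_prop

/-- the tear profile: `1` below `3/8`, `0` above `3/4`. -/
noncomputable def gfun (r : ℝ) : ℝ := cl01 (2 - (8/3)*r)

lemma gfun_nonneg (r : ℝ) : 0 ≤ gfun r := cl01_nonneg _
lemma gfun_le_one (r : ℝ) : gfun r ≤ 1 := cl01_le_one _
lemma gfun_eq_one {r : ℝ} (h : r ≤ 3/8) : gfun r = 1 := by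
  apply cl01_eq_one; nlinarith
lemma gfun_eq_zero {r : ℝ} (h : 3/4 ≤ r) : gfun r = 0 := by
  apply cl01_eq_zero; nlinarith
lemma abs_gfun_sub (a b : ℝ) : |gfun a - gfun b| ≤ (8/3) * |a - b| := by
  calc |gfun a - gfun b| ≤ |(2 - (8/3)*a) - (2 - (8/3)*b)| := abs_cl01_sub _ _
    _ = (8/3) * |a - b| := by
        rw [show (2 - (8/3)*a) - (2 - (8/3)*b) = (8/3)*(b - a) by ring, abs_mul,
          abs_sub_comm]
        norm_num

/-- dyadic scale factors -/
noncomputable def pw (j : ℕ) : ℝ := 2 ^ (j+1)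
noncomputable def sw (j : ℕ) : ℝ := (pw j)⁻¹

lemma pw_pos (j : ℕ) : 0 < pw j := by unfold pw; positivity
lemma sw_pos (j : ℕ) : 0 < sw j := by unfold sw; have := pw_pos j; positivity
lemma sw_mul_pw (j : ℕ) : sw j * pw j = 1 := inv_mul_cancel₀ (pw_pos j).ne'
lemma two_le_pw (j : ℕ) : 2 ≤ pw j := by
  unfold pw
  calc (2:ℝ) = 2^1 := by norm_num
    _ ≤ 2^(j+1) := by
      apply pow_le_pow_right₀ (by norm_num) (by omega)
lemma sw_le_half (j : ℕ) : sw j ≤ 1/2 := by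
  unfold sw
  rw [inv_le_comm₀ (pw_pos j) (by norm_num : (0:ℝ) < 1/2)]
  simpa using two_le_pw j
lemma sw_le_one (j : ℕ) : sw j ≤ 1 := (sw_le_half j).trans (by norm_num)
lemma sw_antitone {j k : ℕ} (h : j ≤ k) : sw k ≤ sw j := by
  unfold sw
  apply inv_anti₀ (pw_pos j)
  apply pow_le_pow_right₀ (by norm_num) (by omega)
lemma sw_strictanti {j k : ℕ} (h : j < k) : sw k < sw j := by
  unfold sw pw
  apply inv_strictAnti₀ (by positivity)
  apply pow_lt_pow_right₀ (by norm_num) (by omega)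
lemma sw_inj {j k : ℕ} (h : sw j = sw k) : j = k := by
  rcases lt_trichotomy j k with hlt | he | hlt
  · exact absurd h (sw_strictanti hlt).ne'
  · exact he
  · exact absurd h (sw_strictanti hlt).ne

/-- the detector tent at scale j -/
noncomputable def Tf (j : ℕ) (t : ℝ) : ℝ := cl01 (2 - 8*|t * pw j - 1|)
/-- the (narrower) displacement tent at scale j -/
noncomputable def th (j : ℕ) (t : ℝ) : ℝ := cl01 (2 - 32*|t * pw j - 1|)

lemma Tf_nonneg (j : ℕ) (t : ℝ) : 0 ≤ Tf j t := cl01_nonneg _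
lemma Tf_le_one (j : ℕ) (t : ℝ) : Tf j t ≤ 1 := cl01_le_one _
lemma th_nonneg (j : ℕ) (t : ℝ) : 0 ≤ th j t := cl01_nonneg _
lemma th_le_one (j : ℕ) (t : ℝ) : th j t ≤ 1 := cl01_le_one _
lemma th_le_Tf (j : ℕ) (t : ℝ) : th j t ≤ Tf j t := by
  apply cl01_mono
  have : 0 ≤ |t * pw j - 1| := abs_nonneg _
  nlinarith

lemma Tf_self (j : ℕ) : Tf j (sw j) = 1 := by
  unfold Tf; rw [sw_mul_pw]; apply cl01_eq_one; simp
lemma th_self (j : ℕ) : th j (sw j) = 1 := by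
  unfold th; rw [sw_mul_pw]; apply cl01_eq_one; simp

lemma Tf_eq_zero {j : ℕ} {t : ℝ} (h : 1/4 ≤ |t * pw j - 1|) : Tf j t = 0 := by
  apply cl01_eq_zero; nlinarith
lemma th_eq_zero {j : ℕ} {t : ℝ} (h : 1/16 ≤ |t * pw j - 1|) : th j t = 0 := by
  apply cl01_eq_zero; nlinarith

lemma of_th_ne_zero {j : ℕ} {t : ℝ} (h : th j t ≠ 0) :
    15/16 < t * pw j ∧ t * pw j < 17/16 := by
  by_contra hc
  apply h
  apply th_eq_zero
  rw [not_and_or, not_lt, not_lt] at hc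
  rcases hc with h1 | h1
  · rw [abs_sub_comm]; rw [abs_of_nonneg (by linarith)]; linarith
  · rw [abs_of_nonneg (by linarith)]; linarith

lemma th_single {j k : ℕ} {t : ℝ} (hj : th j t ≠ 0) (hk : th k t ≠ 0) : j = k := by
  obtain ⟨hj1, hj2⟩ := of_th_ne_zero hj
  obtain ⟨hk1, hk2⟩ := of_th_ne_zero hk
  by_contra hne
  have ht : 0 < t := by
    have := pw_pos j
    nlinarith
  rcases Nat.lt_or_ge j k with h | h
  · -- pw k ≥ 2 pw j
    have h2 : 2 * pw j ≤ pw k := by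
      unfold pw
      calc 2 * 2^(j+1) = 2^(j+2) := by ring
        _ ≤ (2:ℝ)^(k+1) := pow_le_pow_right₀ (by norm_num) (by omega)
    nlinarith
  · have hlt : k < j := by omega
    have h2 : 2 * pw k ≤ pw j := by
      unfold pw
      calc 2 * 2^(k+1) = 2^(k+2) := by ring
        _ ≤ (2:ℝ)^(j+1) := pow_le_pow_right₀ (by norm_num) (by omega)
    nlinarith

lemma abs_Tf_sub (j : ℕ) (a b : ℝ) : |Tf j a - Tf j b| ≤ 8 * pw j * |a - b| := by
  have key : |(2 - 8*|a * pw j - 1|) - (2 - 8*|b * pw j - 1|)| ≤ 8 * pw j * |a - b| := by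
    have h1 : |(|a * pw j - 1|) - (|b * pw j - 1|)| ≤ |(a * pw j - 1) - (b * pw j - 1)| :=
      abs_abs_sub_abs_le_abs_sub _ _
    have h2 : (a * pw j - 1) - (b * pw j - 1) = pw j * (a - b) := by ring
    rw [h2, abs_mul, abs_of_pos (pw_pos j)] at h1
    have h3 : (2 - 8*|a * pw j - 1|) - (2 - 8*|b * pw j - 1|)
        = 8 * ((|b * pw j - 1|) - (|a * pw j - 1|)) := by ring
    rw [h3, abs_mul, abs_sub_comm]
    rw [show |(8:ℝ)| = 8 by norm_num]
    nlinarith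
  exact (abs_cl01_sub _ _).trans key

lemma abs_th_sub (j : ℕ) (a b : ℝ) : |th j a - th j b| ≤ 32 * pw j * |a - b| := by
  have key : |(2 - 32*|a * pw j - 1|) - (2 - 32*|b * pw j - 1|)| ≤ 32 * pw j * |a - b| := by
    have h1 : |(|a * pw j - 1|) - (|b * pw j - 1|)| ≤ |(a * pw j - 1) - (b * pw j - 1)| :=
      abs_abs_sub_abs_le_abs_sub _ _
    have h2 : (a * pw j - 1) - (b * pw j - 1) = pw j * (a - b) := by ring
    rw [h2, abs_mul, abs_of_pos (pw_pos j)] at h1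
    have h3 : (2 - 32*|a * pw j - 1|) - (2 - 32*|b * pw j - 1|)
        = 32 * ((|b * pw j - 1|) - (|a * pw j - 1|)) := by ring
    rw [h3, abs_mul, abs_sub_comm]
    rw [show |(32:ℝ)| = 32 by norm_num]
    nlinarith
  exact (abs_cl01_sub _ _).trans key

lemma Tf_continuous (j : ℕ) : Continuous (Tf j) := by
  unfold Tf
  apply cl01_continuous.comp
  fun_prop

lemma th_continuous (j : ℕ) : Continuous (th j) := by
  unfold th
  apply cl01_continuous.comp
  fun_prop

/-- values of the tents at the atoms -/
lemma sw_mul_pw_le_half {j k : ℕ} (h : j < k) : sw k * pw j ≤ 1/2 := by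
  unfold sw pw
  have hp : (2:ℝ)^(j+2) ≤ 2^(k+1) := pow_le_pow_right₀ one_le_two (by omega)
  rw [inv_mul_eq_div, div_le_iff₀ (by positivity)]
  calc (2:ℝ)^(j+1) = 1/2 * 2^(j+2) := by rw [pow_succ]; ring
    _ ≤ 1/2 * 2^(k+1) := by nlinarith

lemma two_le_sw_mul_pw {j k : ℕ} (h : k < j) : 2 ≤ sw k * pw j := by
  unfold sw pw
  have hp : (2:ℝ)^(k+2) ≤ 2^(j+1) := pow_le_pow_right₀ one_le_two (by omega)
  rw [inv_mul_eq_div, le_div_iff₀ (by positivity)]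
  calc (2:ℝ) * 2^(k+1) = 2^(k+2) := by rw [pow_succ]; ring
    _ ≤ 2^(j+1) := hp

lemma Tf_atom_ne {j k : ℕ} (h : j ≠ k) : Tf j (sw k) = 0 := by
  apply Tf_eq_zero
  rcases Nat.lt_or_ge j k with hlt | hge
  · have h1 := sw_mul_pw_le_half hlt
    have h0 : 0 < sw k * pw j := mul_pos (sw_pos k) (pw_pos j)
    rw [abs_sub_comm, abs_of_nonneg (by linarith)]
    linarith
  · have hlt : k < j := by omega
    have h1 := two_le_sw_mul_pw hlt
    rw [abs_of_nonneg (by linarith)]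
    linarith

lemma Tf_neg_eq_zero {j : ℕ} {t : ℝ} (ht : t ≤ 0) : Tf j t = 0 := by
  apply Tf_eq_zero
  have h1 : t * pw j ≤ 0 := mul_nonpos_of_nonpos_of_nonneg ht (pw_pos j).le
  rw [abs_sub_comm, abs_of_nonneg (by linarith)]
  linarith

lemma Tf_two (j : ℕ) : Tf j 2 = 0 := by
  apply Tf_eq_zero
  have := two_le_pw j
  rw [abs_of_nonneg (by nlinarith)]
  nlinarith

lemma th_atom_ne {j k : ℕ} (h : j ≠ k) : th j (sw k) = 0 := by
  have hT := Tf_atom_ne h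
  have h1 := th_le_Tf j (sw k)
  have h2 := th_nonneg j (sw k)
  linarith
lemma th_neg_eq_zero {j : ℕ} {t : ℝ} (ht : t ≤ 0) : th j t = 0 := by
  have hT := Tf_neg_eq_zero (j := j) ht
  have h1 := th_le_Tf j t
  have h2 := th_nonneg j t
  linarith
lemma th_two (j : ℕ) : th j 2 = 0 := by
  have hT := Tf_two j
  have h1 := th_le_Tf j 2
  have h2 := th_nonneg j 2
  linarith


/-! ### Measure-side definitions -/

open MeasureTheory Set
open scoped ENNReal

noncomputable def tP (j : ℕ) (ν : Measure ℝ) : ℝ≥0∞ := ∫⁻ t, ENNReal.ofReal (Tf j t) ∂ν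
noncomputable def tM (j : ℕ) (ν : Measure ℝ) : ℝ≥0∞ := ∫⁻ t, ENNReal.ofReal (Tf j (-t)) ∂ν
noncomputable def rP (j : ℕ) (ν : Measure ℝ) : ℝ := (4:ℝ)^(j+1) * (tP j ν).toReal
noncomputable def rM (j : ℕ) (ν : Measure ℝ) : ℝ := (4:ℝ)^(j+1) * (tM j ν).toReal
noncomputable def gP (j : ℕ) (ν : Measure ℝ) : ℝ := gfun (rP j ν)
noncomputable def gM (j : ℕ) (ν : Measure ℝ) : ℝ := gfun (rM j ν)

lemma gP_nonneg (j : ℕ) (ν : Measure ℝ) : 0 ≤ gP j ν := gfun_nonneg _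
lemma gP_le_one (j : ℕ) (ν : Measure ℝ) : gP j ν ≤ 1 := gfun_le_one _
lemma gM_nonneg (j : ℕ) (ν : Measure ℝ) : 0 ≤ gM j ν := gfun_nonneg _
lemma gM_le_one (j : ℕ) (ν : Measure ℝ) : gM j ν ≤ 1 := gfun_le_one _

noncomputable def DPE (ν : Measure ℝ) (x : ℝ) : ℝ≥0∞ :=
  ∑' j, ENNReal.ofReal (th j x * gP j ν)
noncomputable def DME (ν : Measure ℝ) (x : ℝ) : ℝ≥0∞ :=
  ∑' j, ENNReal.ofReal (th j (-x) * gM j ν)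

noncomputable def H (ν : Measure ℝ) (x : ℝ) : ℝ :=
  cl3 (x + (DPE ν x).toReal - (DME ν x).toReal)

noncomputable def fmap (ν : Measure ℝ) : Measure ℝ := Measure.map (H ν) ν

lemma DPE_single {ν : Measure ℝ} {x : ℝ} {j₀ : ℕ} (h : th j₀ x ≠ 0) :
    DPE ν x = ENNReal.ofReal (th j₀ x * gP j₀ ν) := by
  unfold DPE
  apply tsum_eq_single
  intro b hb
  rcases eq_or_ne (th b x) 0 with h0 | h0
  · simp [h0]
  · exact absurd (th_single h0 h) hb

lemma DME_single {ν : Measure ℝ} {x : ℝ} {j₀ : ℕ} (h : th j₀ (-x) ≠ 0) :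
    DME ν x = ENNReal.ofReal (th j₀ (-x) * gM j₀ ν) := by
  unfold DME
  apply tsum_eq_single
  intro b hb
  rcases eq_or_ne (th b (-x)) 0 with h0 | h0
  · simp [h0]
  · exact absurd (th_single h0 h) hb

lemma DPE_eq_zero {ν : Measure ℝ} {x : ℝ} (h : ∀ j, th j x = 0) : DPE ν x = 0 := by
  unfold DPE
  rw [ENNReal.tsum_eq_zero]
  intro j; simp [h j]

lemma DME_eq_zero {ν : Measure ℝ} {x : ℝ} (h : ∀ j, th j (-x) = 0) : DME ν x = 0 := by
  unfold DME
  rw [ENNReal.tsum_eq_zero]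
  intro j; simp [h j]

lemma DPE_le_one (ν : Measure ℝ) (x : ℝ) : DPE ν x ≤ 1 := by
  by_cases h : ∀ j, th j x = 0
  · rw [DPE_eq_zero h]; exact zero_le_one
  · push_neg at h
    obtain ⟨j₀, hj₀⟩ := h
    rw [DPE_single hj₀]
    rw [show (1:ℝ≥0∞) = ENNReal.ofReal 1 by simp]
    apply ENNReal.ofReal_le_ofReal
    have h1 := th_le_one j₀ x
    have h2 := th_nonneg j₀ x
    have h3 := gP_le_one j₀ ν
    have h4 := gP_nonneg j₀ ν
    nlinarith

lemma DME_le_one (ν : Measure ℝ) (x : ℝ) : DME ν x ≤ 1 := by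
  by_cases h : ∀ j, th j (-x) = 0
  · rw [DME_eq_zero h]; exact zero_le_one
  · push_neg at h
    obtain ⟨j₀, hj₀⟩ := h
    rw [DME_single hj₀]
    rw [show (1:ℝ≥0∞) = ENNReal.ofReal 1 by simp]
    apply ENNReal.ofReal_le_ofReal
    have h1 := th_le_one j₀ (-x)
    have h2 := th_nonneg j₀ (-x)
    have h3 := gM_le_one j₀ ν
    have h4 := gM_nonneg j₀ ν
    nlinarith

lemma DPE_ne_top (ν : Measure ℝ) (x : ℝ) : DPE ν x ≠ ⊤ :=
  (lt_of_le_of_lt (DPE_le_one ν x) (by simp)).ne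
lemma DME_ne_top (ν : Measure ℝ) (x : ℝ) : DME ν x ≠ ⊤ :=
  (lt_of_le_of_lt (DME_le_one ν x) (by simp)).ne

lemma DPE_toReal_le_one (ν : Measure ℝ) (x : ℝ) : (DPE ν x).toReal ≤ 1 := by
  have := DPE_le_one ν x
  calc (DPE ν x).toReal ≤ (1:ℝ≥0∞).toReal := ENNReal.toReal_mono (by simp) this
    _ = 1 := by simp
lemma DME_toReal_le_one (ν : Measure ℝ) (x : ℝ) : (DME ν x).toReal ≤ 1 := by
  have := DME_le_one ν x
  calc (DME ν x).toReal ≤ (1:ℝ≥0∞).toReal := ENNReal.toReal_mono (by simp) this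
    _ = 1 := by simp

lemma measurable_DPE (ν : Measure ℝ) : Measurable (fun x => DPE ν x) := by
  unfold DPE
  apply Measurable.ennreal_tsum
  intro j
  apply ENNReal.measurable_ofReal.comp
  exact ((th_continuous j).mul continuous_const).measurable

lemma measurable_DME (ν : Measure ℝ) : Measurable (fun x => DME ν x) := by
  unfold DME
  apply Measurable.ennreal_tsum
  intro j
  apply ENNReal.measurable_ofReal.comp
  exact (((th_continuous j).comp continuous_neg).mul continuous_const).measurable

lemma measurable_H (ν : Measure ℝ) : Measurable (H ν) := by
  unfold H
  apply cl3_continuous.measurable.comp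
  apply Measurable.sub
  · exact measurable_id.add ((measurable_DPE ν).ennreal_toReal)
  · exact (measurable_DME ν).ennreal_toReal

lemma H_mem (ν : Measure ℝ) (x : ℝ) : H ν x ∈ Set.Icc (-3:ℝ) 3 := cl3_mem _
lemma abs_H_le (ν : Measure ℝ) (x : ℝ) : |H ν x| ≤ 3 := abs_cl3_le _

/-! ### W1 lemmas -/

open scoped NNReal

instance : Nonempty {φ : ℝ → ℝ // LipschitzWith 1 φ} :=
  ⟨⟨fun _ => 0, (LipschitzWith.const 0).weaken zero_le_one⟩⟩

lemma W1_self (μ : Measure ℝ) : W1 μ μ = 0 := by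
  unfold W1
  simp only [sub_self]
  exact ciSup_const

lemma lip_abs {K : ℝ≥0} {ψ : ℝ → ℝ} (h : LipschitzWith K ψ) (a b : ℝ) :
    |ψ a - ψ b| ≤ (K:ℝ) * |a - b| := by
  have := h.dist_le_mul a b
  rwa [Real.dist_eq, Real.dist_eq] at this

lemma integrable_of_bdd {ν : Measure ℝ} [IsFiniteMeasure ν] {u : ℝ → ℝ}
    (hu : AEStronglyMeasurable u ν) {C : ℝ} (hb : ∀ᵐ x ∂ν, |u x| ≤ C) :
    Integrable u ν :=
  (integrable_const C).mono' hu (by simpa [Real.norm_eq_abs] using hb)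

lemma ae_mem_Icc {ν : Measure ℝ} (hc : ν (Set.Icc (-3:ℝ) 3)ᶜ = 0) :
    ∀ᵐ x ∂ν, x ∈ Set.Icc (-3:ℝ) 3 := by
  rw [MeasureTheory.ae_iff]
  have h : {x : ℝ | ¬ x ∈ Set.Icc (-3:ℝ) 3} = (Set.Icc (-3:ℝ) 3)ᶜ := rfl
  rw [h]; exact hc

lemma lip_integrable {ν : Measure ℝ} [IsFiniteMeasure ν]
    (hc : ν (Set.Icc (-3:ℝ) 3)ᶜ = 0) {φ : ℝ → ℝ} (hφ : LipschitzWith 1 φ) :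
    Integrable φ ν := by
  apply integrable_of_bdd hφ.continuous.aestronglyMeasurable (C := |φ 0| + 3)
  filter_upwards [ae_mem_Icc hc] with x hx
  have h1 : |φ x - φ 0| ≤ 1 * |x - 0| := lip_abs hφ x 0
  have h2 : |x| ≤ 3 := by
    rw [abs_le]; exact ⟨hx.1, hx.2⟩
  have := abs_sub_abs_le_abs_sub (φ x) (φ 0)
  simp only [sub_zero, one_mul] at h1
  linarith

lemma test_le_six {μ ν : Measure ℝ}
    (hμ : IsProbabilityMeasure μ) (hν : IsProbabilityMeasure ν)
    (hμc : μ (Set.Icc (-3:ℝ) 3)ᶜ = 0) (hνc : ν (Set.Icc (-3:ℝ) 3)ᶜ = 0)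
    (φ : ℝ → ℝ) (hφ : LipschitzWith 1 φ) :
    (∫ x, φ x ∂μ) - ∫ x, φ x ∂ν ≤ 6 := by
  have key : ∀ (ρ : Measure ℝ), IsProbabilityMeasure ρ → ρ (Set.Icc (-3:ℝ) 3)ᶜ = 0 →
      |(∫ x, φ x ∂ρ) - φ 0| ≤ 3 := by
    intro ρ hρ hρc
    have hint : Integrable φ ρ := lip_integrable hρc hφ
    have h0 : (∫ x, φ x ∂ρ) - φ 0 = ∫ x, (φ x - φ 0) ∂ρ := by
      rw [integral_sub hint (integrable_const _), integral_const]
      simp [hρ.measure_univ]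
    rw [h0]
    rw [show |∫ x, (φ x - φ 0) ∂ρ| = ‖∫ x, (φ x - φ 0) ∂ρ‖ by rw [Real.norm_eq_abs]]
    calc ‖∫ x, (φ x - φ 0) ∂ρ‖ ≤ ∫ _x, (3:ℝ) ∂ρ := by
          apply norm_integral_le_of_norm_le (integrable_const 3)
          filter_upwards [ae_mem_Icc hρc] with x hx
          rw [Real.norm_eq_abs]
          have h1 : |φ x - φ 0| ≤ 1 * |x - 0| := lip_abs hφ x 0
          have h2 : |x| ≤ 3 := by rw [abs_le]; exact ⟨hx.1, hx.2⟩
          simp only [sub_zero, one_mul] at h1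
          linarith
      _ = 3 := by simp [hρ.measure_univ]
  have k1 := key μ hμ hμc
  have k2 := key ν hν hνc
  rw [abs_le] at k1 k2
  linarith [k1.2, k2.1]

lemma bddAbove_test {μ ν : Measure ℝ}
    (hμ : IsProbabilityMeasure μ) (hν : IsProbabilityMeasure ν)
    (hμc : μ (Set.Icc (-3:ℝ) 3)ᶜ = 0) (hνc : ν (Set.Icc (-3:ℝ) 3)ᶜ = 0) :
    BddAbove (Set.range (fun φ : {φ : ℝ → ℝ // LipschitzWith 1 φ} =>
      (∫ x, φ.1 x ∂μ) - ∫ x, φ.1 x ∂ν)) := by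
  refine ⟨6, ?_⟩
  rintro r ⟨φ, rfl⟩
  exact test_le_six hμ hν hμc hνc φ.1 φ.2

lemma le_W1 {μ ν : Measure ℝ}
    (hμ : IsProbabilityMeasure μ) (hν : IsProbabilityMeasure ν)
    (hμc : μ (Set.Icc (-3:ℝ) 3)ᶜ = 0) (hνc : ν (Set.Icc (-3:ℝ) 3)ᶜ = 0)
    {ψ : ℝ → ℝ} (hψ : LipschitzWith 1 ψ) :
    (∫ x, ψ x ∂μ) - ∫ x, ψ x ∂ν ≤ W1 μ ν :=
  le_ciSup (bddAbove_test hμ hν hμc hνc) (⟨ψ, hψ⟩ : {φ : ℝ → ℝ // LipschitzWith 1 φ})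

lemma W1_nonneg {μ ν : Measure ℝ}
    (hμ : IsProbabilityMeasure μ) (hν : IsProbabilityMeasure ν)
    (hμc : μ (Set.Icc (-3:ℝ) 3)ᶜ = 0) (hνc : ν (Set.Icc (-3:ℝ) 3)ᶜ = 0) :
    0 ≤ W1 μ ν := by
  have := le_W1 hμ hν hμc hνc ((LipschitzWith.const 0).weaken zero_le_one)
  simpa using this

/-- scaled Lipschitz test against W1 -/
lemma test_le_W1_scaled {μ ν : Measure ℝ}
    (hμ : IsProbabilityMeasure μ) (hν : IsProbabilityMeasure ν)
    (hμc : μ (Set.Icc (-3:ℝ) 3)ᶜ = 0) (hνc : ν (Set.Icc (-3:ℝ) 3)ᶜ = 0)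
    {ψ : ℝ → ℝ} {K : ℝ} (hK : 0 < K) (hψ : ∀ a b, |ψ a - ψ b| ≤ K * |a - b|) :
    |(∫ x, ψ x ∂μ) - ∫ x, ψ x ∂ν| ≤ K * W1 μ ν := by
  have lip : ∀ (c : ℝ), c = 1 ∨ c = -1 → LipschitzWith 1 (fun x => c * ψ x / K) := by
    intro c hc
    apply LipschitzWith.of_dist_le_mul
    intro a b
    rw [Real.dist_eq, Real.dist_eq, NNReal.coe_one, one_mul]
    have h1 := hψ a b
    have hcabs : |c| = 1 := by rcases hc with rfl | rfl <;> norm_num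
    rw [show c * ψ a / K - c * ψ b / K = c * ((ψ a - ψ b) / K) by ring, abs_mul, hcabs,
      one_mul, abs_div, abs_of_pos hK, div_le_iff₀ hK]
    linarith [abs_nonneg (a - b)]
  have key : ∀ (c : ℝ), c = 1 ∨ c = -1 →
      c * ((∫ x, ψ x ∂μ) - ∫ x, ψ x ∂ν) ≤ K * W1 μ ν := by
    intro c hc
    have h2 := le_W1 hμ hν hμc hνc (lip c hc)
    have h3 : (∫ x, c * ψ x / K ∂μ) = c * (∫ x, ψ x ∂μ) / K := by
      rw [show (fun x => c * ψ x / K) = fun x => (c / K) * ψ x by funext x; ring]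
      rw [integral_const_mul]
      ring
    have h4 : (∫ x, c * ψ x / K ∂ν) = c * (∫ x, ψ x ∂ν) / K := by
      rw [show (fun x => c * ψ x / K) = fun x => (c / K) * ψ x by funext x; ring]
      rw [integral_const_mul]
      ring
    rw [h3, h4] at h2
    rw [show c * (∫ x, ψ x ∂μ) / K - c * (∫ x, ψ x ∂ν) / K
      = (c * ((∫ x, ψ x ∂μ) - ∫ x, ψ x ∂ν)) / K by ring] at h2
    rw [div_le_iff₀ hK] at h2
    calc c * ((∫ x, ψ x ∂μ) - ∫ x, ψ x ∂ν) ≤ W1 μ ν * K := h2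
      _ = K * W1 μ ν := by ring
  rcases abs_cases ((∫ x, ψ x ∂μ) - ∫ x, ψ x ∂ν) with ⟨he, _⟩ | ⟨he, _⟩
  · rw [he]; simpa using key 1 (Or.inl rfl)
  · rw [he]; simpa using key (-1) (Or.inr rfl)

lemma W1_le_of_forall {μ ν : Measure ℝ} {c : ℝ} (hc : 0 ≤ c)
    (h : ∀ φ : ℝ → ℝ, LipschitzWith 1 φ → (∫ x, φ x ∂μ) - ∫ x, φ x ∂ν ≤ c) :
    W1 μ ν ≤ c := by
  apply Real.iSup_le _ hc
  intro φ
  exact h φ.1 φ.2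

/-! ### The witness measure μstar -/

lemma cl3_eq_self {r : ℝ} (h1 : -3 ≤ r) (h2 : r ≤ 3) : cl3 r = r := by
  unfold cl3; rw [min_eq_right h2]; exact max_eq_right h1

noncomputable def wk (j : ℕ) : ℝ≥0∞ := ENNReal.ofReal ((3/8) * ((4:ℝ)^(j+1))⁻¹)
noncomputable def swt : ℝ≥0∞ := ENNReal.ofReal (3/4)

noncomputable def μstar : Measure ℝ :=
  swt • Measure.dirac 2 + Measure.sum (fun j => wk j • Measure.dirac (sw j))
    + Measure.sum (fun j => wk j • Measure.dirac (-sw j))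

lemma wk_toReal (j : ℕ) : (wk j).toReal = (3/8) * ((4:ℝ)^(j+1))⁻¹ := by
  unfold wk; rw [ENNReal.toReal_ofReal (by positivity)]

lemma wk_ne_zero (j : ℕ) : wk j ≠ 0 := by
  unfold wk
  rw [ne_eq, ENNReal.ofReal_eq_zero, not_le]
  positivity

lemma wk_ne_top (j : ℕ) : wk j ≠ ⊤ := ENNReal.ofReal_ne_top

lemma wk_lt (j k : ℕ) (h : j < k) : wk k < wk j := by
  unfold wk
  apply ENNReal.ofReal_lt_ofReal_iff_of_nonneg (by positivity) |>.mpr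
  have : (4:ℝ)^(j+1) < (4:ℝ)^(k+1) := by
    apply pow_lt_pow_right₀ (by norm_num) (by omega)
  have h4j : (0:ℝ) < 4^(j+1) := by positivity
  have h4k : (0:ℝ) < 4^(k+1) := by positivity
  have := inv_strictAnti₀ h4j this
  nlinarith

/-- lintegral against μstar -/
lemma lintegral_μstar (f : ℝ → ℝ≥0∞) :
    ∫⁻ t, f t ∂μstar
      = swt * f 2 + (∑' j, wk j * f (sw j)) + ∑' j, wk j * f (-sw j) := by
  unfold μstar
  rw [lintegral_add_measure, lintegral_add_measure, lintegral_sum_measure,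
    lintegral_sum_measure, lintegral_smul_measure, lintegral_dirac]
  congr 1
  · congr 1
    · apply tsum_congr; intro j
      rw [lintegral_smul_measure, lintegral_dirac, smul_eq_mul]
  · apply tsum_congr; intro j
    rw [lintegral_smul_measure, lintegral_dirac, smul_eq_mul]

lemma tsum_wk : (∑' j, wk j) = ENNReal.ofReal (1/8) := by
  unfold wk
  have hsummable : Summable (fun j : ℕ => (3/8) * ((4:ℝ)^(j+1))⁻¹) := by
    apply Summable.mul_left
    have : (fun j : ℕ => ((4:ℝ)^(j+1))⁻¹) = fun j : ℕ => (1/4) * (1/4)^j := by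
      funext j
      rw [pow_succ]
      field_simp
      rw [← mul_pow]; norm_num
    rw [this]
    exact (summable_geometric_of_lt_one (by norm_num) (by norm_num)).mul_left _
  rw [← ENNReal.ofReal_tsum_of_nonneg (fun j => by positivity) hsummable]
  congr 1
  have h1 : (fun j : ℕ => (3/8) * ((4:ℝ)^(j+1))⁻¹) = fun j : ℕ => (3/32) * (1/4)^j := by
    funext j
    rw [pow_succ]
    field_simp
    rw [show (8:ℝ) * 4 ^ j * 4 * (1 / 4) ^ j = 32 * (4 * (1/4)) ^ j by rw [mul_pow]; ring]
    norm_num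
  rw [h1, tsum_mul_left, tsum_geometric_of_lt_one (by norm_num) (by norm_num)]
  norm_num

instance μstar_prob : IsProbabilityMeasure μstar := by
  constructor
  have := lintegral_μstar (fun _ => 1)
  rw [lintegral_one] at this
  rw [this]
  simp only [mul_one]
  rw [tsum_wk]
  unfold swt
  rw [← ENNReal.ofReal_add (by norm_num) (by norm_num),
    ← ENNReal.ofReal_add (by norm_num) (by norm_num)]
  norm_num

lemma sw_mem_Icc (j : ℕ) : sw j ∈ Set.Icc (-3:ℝ) 3 := by
  have h1 := sw_pos j
  have h2 := sw_le_half j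
  constructor <;> [linarith; linarith]

lemma neg_sw_mem_Icc (j : ℕ) : -sw j ∈ Set.Icc (-3:ℝ) 3 := by
  have h1 := sw_pos j
  have h2 := sw_le_half j
  constructor <;> [linarith; linarith]

lemma μstar_compl_Icc : μstar (Set.Icc (-3:ℝ) 3)ᶜ = 0 := by
  have hmeas : MeasurableSet (Set.Icc (-3:ℝ) 3)ᶜ := measurableSet_Icc.compl
  have key : ∀ z : ℝ, z ∈ Set.Icc (-3:ℝ) 3 → Measure.dirac z (Set.Icc (-3:ℝ) 3)ᶜ = 0 := by
    intro z hz
    rw [Measure.dirac_apply' _ hmeas]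
    simp [Set.indicator_of_notMem, hz]
  unfold μstar
  rw [Measure.add_apply, Measure.add_apply, Measure.smul_apply,
    Measure.sum_apply _ hmeas, Measure.sum_apply _ hmeas]
  rw [key 2 (by norm_num)]
  have k1 : ∀ j : ℕ, (wk j • Measure.dirac (sw j)) (Set.Icc (-3:ℝ) 3)ᶜ = 0 := by
    intro j
    rw [Measure.smul_apply, key _ (sw_mem_Icc j)]
    simp
  have k2 : ∀ j : ℕ, (wk j • Measure.dirac (-sw j)) (Set.Icc (-3:ℝ) 3)ᶜ = 0 := by
    intro j
    rw [Measure.smul_apply, key _ (neg_sw_mem_Icc j)]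
    simp
  simp [k1, k2]

/-- generic singleton/set evaluation of μstar -/
lemma μstar_apply {s : Set ℝ} (hs : MeasurableSet s) :
    μstar s = swt * s.indicator 1 2 + (∑' j, wk j * s.indicator 1 (sw j))
      + ∑' j, wk j * s.indicator 1 (-sw j) := by
  unfold μstar
  rw [Measure.add_apply, Measure.add_apply, Measure.smul_apply,
    Measure.sum_apply _ hs, Measure.sum_apply _ hs, Measure.dirac_apply' _ hs]
  have k1 : ∀ j : ℕ, (wk j • Measure.dirac (sw j)) s = wk j * s.indicator 1 (sw j) := by
    intro j; rw [Measure.smul_apply, Measure.dirac_apply' _ hs]; rfl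
  have k2 : ∀ j : ℕ, (wk j • Measure.dirac (-sw j)) s = wk j * s.indicator 1 (-sw j) := by
    intro j; rw [Measure.smul_apply, Measure.dirac_apply' _ hs]; rfl
  simp only [k1, k2]
  rfl

/-! ### atom values -/

lemma two_ne_sw (j : ℕ) : (2:ℝ) ≠ sw j := by
  have := sw_le_half j; intro h; rw [← h] at this; norm_num at this
lemma neg_sw_ne_sw (j k : ℕ) : -sw j ≠ sw k := by
  have h1 := sw_pos j; have h2 := sw_pos k; intro h; nlinarith [h.symm ▸ h2]
lemma two_ne_neg_sw (j : ℕ) : (2:ℝ) ≠ -sw j := by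
  have := sw_pos j; intro h; nlinarith

lemma ind_singleton_self (y : ℝ) : ({y} : Set ℝ).indicator (1 : ℝ → ℝ≥0∞) y = 1 := by
  simp
lemma ind_singleton_ne {y z : ℝ} (h : z ≠ y) :
    ({y} : Set ℝ).indicator (1 : ℝ → ℝ≥0∞) z = 0 := by
  simp [Set.indicator_of_notMem, h]

lemma μstar_singleton_sw (k : ℕ) : μstar {sw k} = wk k := by
  rw [μstar_apply (measurableSet_singleton _)]
  rw [ind_singleton_ne (two_ne_sw k), mul_zero]
  have h2 : (∑' j, wk j * ({sw k} : Set ℝ).indicator 1 (-sw j)) = 0 := by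
    rw [ENNReal.tsum_eq_zero]
    intro j
    rw [ind_singleton_ne (neg_sw_ne_sw j k), mul_zero]
  have h1 : (∑' j, wk j * ({sw k} : Set ℝ).indicator 1 (sw j)) = wk k := by
    rw [tsum_eq_single k]
    · rw [ind_singleton_self, mul_one]
    · intro b hb
      rw [ind_singleton_ne (fun h => hb (sw_inj h)), mul_zero]
  rw [h1, h2]
  simp

lemma μstar_singleton_neg_sw (k : ℕ) : μstar {-sw k} = wk k := by
  rw [μstar_apply (measurableSet_singleton _)]
  rw [ind_singleton_ne (two_ne_neg_sw k), mul_zero]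
  have h1 : (∑' j, wk j * ({-sw k} : Set ℝ).indicator 1 (sw j)) = 0 := by
    rw [ENNReal.tsum_eq_zero]
    intro j
    rw [ind_singleton_ne (fun h => (neg_sw_ne_sw k j) h.symm), mul_zero]
  have h2 : (∑' j, wk j * ({-sw k} : Set ℝ).indicator 1 (-sw j)) = wk k := by
    rw [tsum_eq_single k]
    · rw [ind_singleton_self, mul_one]
    · intro b hb
      rw [ind_singleton_ne (fun h => hb (sw_inj (neg_injective h))), mul_zero]
  rw [h1, h2]
  simp

lemma μstar_singleton_two : μstar {(2:ℝ)} = swt := by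
  rw [μstar_apply (measurableSet_singleton _)]
  rw [ind_singleton_self, mul_one]
  have h1 : (∑' j, wk j * ({(2:ℝ)} : Set ℝ).indicator 1 (sw j)) = 0 := by
    rw [ENNReal.tsum_eq_zero]; intro j
    rw [ind_singleton_ne (fun h => (two_ne_sw j) h.symm), mul_zero]
  have h2 : (∑' j, wk j * ({(2:ℝ)} : Set ℝ).indicator 1 (-sw j)) = 0 := by
    rw [ENNReal.tsum_eq_zero]; intro j
    rw [ind_singleton_ne (fun h => (two_ne_neg_sw j) h.symm), mul_zero]
  rw [h1, h2]
  simp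

/-- the atom set of μstar -/
def Atoms : Set ℝ := {2} ∪ Set.range sw ∪ Set.range (fun j => -sw j)

lemma Atoms_countable : Atoms.Countable :=
  ((Set.countable_singleton _).union (Set.countable_range _)).union (Set.countable_range _)

lemma μstar_compl_Atoms : μstar Atomsᶜ = 0 := by
  have hmeas : MeasurableSet (Atomsᶜ) := (Atoms_countable.measurableSet).compl
  rw [μstar_apply hmeas]
  have h2 : (2:ℝ) ∈ Atoms := Or.inl (Or.inl rfl)
  have hsw : ∀ j, sw j ∈ Atoms := fun j => Or.inl (Or.inr ⟨j, rfl⟩)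
  have hnsw : ∀ j, -sw j ∈ Atoms := fun j => Or.inr ⟨j, rfl⟩
  rw [Set.indicator_of_notMem (by simpa using h2)]
  have k1 : (∑' j, wk j * (Atomsᶜ).indicator 1 (sw j)) = 0 := by
    rw [ENNReal.tsum_eq_zero]; intro j
    rw [Set.indicator_of_notMem (by simpa using hsw j), mul_zero]
  have k2 : (∑' j, wk j * (Atomsᶜ).indicator 1 (-sw j)) = 0 := by
    rw [ENNReal.tsum_eq_zero]; intro j
    rw [Set.indicator_of_notMem (by simpa using hnsw j), mul_zero]
  rw [k1, k2]
  simp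

/-! ### tent integrals against μstar -/

lemma tP_μstar (j : ℕ) : tP j μstar = wk j := by
  unfold tP
  rw [lintegral_μstar]
  rw [Tf_two j]
  have h3 : (∑' k, wk k * ENNReal.ofReal (Tf j (-sw k))) = 0 := by
    rw [ENNReal.tsum_eq_zero]; intro k
    rw [Tf_neg_eq_zero (by linarith [sw_pos k])]
    simp
  have h2 : (∑' k, wk k * ENNReal.ofReal (Tf j (sw k))) = wk j := by
    rw [tsum_eq_single j]
    · rw [Tf_self]; simp
    · intro b hb
      rw [Tf_atom_ne (fun h => hb h.symm)]
      simp
  rw [h2, h3]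
  simp

lemma tM_μstar (j : ℕ) : tM j μstar = wk j := by
  unfold tM
  rw [lintegral_μstar]
  have h1 : Tf j (-(2:ℝ)) = 0 := Tf_neg_eq_zero (by norm_num)
  rw [h1]
  have h2 : (∑' k, wk k * ENNReal.ofReal (Tf j (-sw k))) = 0 := by
    rw [ENNReal.tsum_eq_zero]; intro k
    rw [Tf_neg_eq_zero (by linarith [sw_pos k])]
    simp
  have h3 : (∑' k, wk k * ENNReal.ofReal (Tf j (- -sw k))) = wk j := by
    simp only [neg_neg]
    rw [tsum_eq_single j]
    · rw [Tf_self]; simp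
    · intro b hb
      rw [Tf_atom_ne (fun h => hb h.symm)]
      simp
  rw [h2, h3]
  simp

lemma rP_μstar (j : ℕ) : rP j μstar = 3/8 := by
  unfold rP
  rw [tP_μstar, wk_toReal]
  have : (4:ℝ)^(j+1) ≠ 0 := by positivity
  field_simp
lemma rM_μstar (j : ℕ) : rM j μstar = 3/8 := by
  unfold rM
  rw [tM_μstar, wk_toReal]
  have : (4:ℝ)^(j+1) ≠ 0 := by positivity
  field_simp

lemma gP_μstar (j : ℕ) : gP j μstar = 1 := by
  unfold gP; rw [rP_μstar]; exact gfun_eq_one le_rfl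
lemma gM_μstar (j : ℕ) : gM j μstar = 1 := by
  unfold gM; rw [rM_μstar]; exact gfun_eq_one le_rfl

/-! ### H at the atoms of μstar -/

lemma H_μstar_sw (j : ℕ) : H μstar (sw j) = sw j + 1 := by
  have h1 : DPE μstar (sw j) = 1 := by
    rw [DPE_single (j₀ := j) (by rw [th_self]; norm_num)]
    rw [th_self, gP_μstar]
    norm_num
  have h2 : DME μstar (sw j) = 0 :=
    DME_eq_zero (fun k => th_neg_eq_zero (by linarith [sw_pos j]))
  unfold H
  rw [h1, h2]
  simp only [ENNReal.toReal_one, ENNReal.toReal_zero]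
  have h3 := sw_pos j
  have h4 := sw_le_half j
  rw [show sw j + 1 - 0 = sw j + 1 by ring]
  exact cl3_eq_self (by linarith) (by linarith)

lemma H_μstar_neg_sw (j : ℕ) : H μstar (-sw j) = -sw j - 1 := by
  have h1 : DPE μstar (-sw j) = 0 :=
    DPE_eq_zero (fun k => th_neg_eq_zero (by linarith [sw_pos j]))
  have h2 : DME μstar (-sw j) = 1 := by
    rw [DME_single (j₀ := j) (by rw [neg_neg, th_self]; norm_num)]
    rw [neg_neg, th_self, gM_μstar]
    norm_num
  unfold H
  rw [h1, h2]
  simp only [ENNReal.toReal_one, ENNReal.toReal_zero]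
  have h3 := sw_pos j
  have h4 := sw_le_half j
  rw [show -sw j + 0 - 1 = -sw j - 1 by ring]
  exact cl3_eq_self (by linarith) (by linarith)

lemma H_μstar_two : H μstar 2 = 2 := by
  have h1 : DPE μstar 2 = 0 := DPE_eq_zero (fun k => th_two k)
  have h2 : DME μstar 2 = 0 :=
    DME_eq_zero (fun k => th_neg_eq_zero (by norm_num))
  unfold H
  rw [h1, h2]
  norm_num
  exact cl3_eq_self (by norm_num) (by norm_num)

/-! ### basic properties of fmap -/

lemma fmap_isProb (ν : Measure ℝ) [IsProbabilityMeasure ν] :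
    IsProbabilityMeasure (fmap ν) :=
  Measure.isProbabilityMeasure_map (measurable_H ν).aemeasurable

lemma fmap_apply (ν : Measure ℝ) {s : Set ℝ} (hs : MeasurableSet s) :
    fmap ν s = ν (H ν ⁻¹' s) :=
  Measure.map_apply (measurable_H ν) hs

lemma fmap_compl_Icc (ν : Measure ℝ) : fmap ν (Set.Icc (-3:ℝ) 3)ᶜ = 0 := by
  rw [fmap_apply _ measurableSet_Icc.compl]
  have : H ν ⁻¹' (Set.Icc (-3:ℝ) 3)ᶜ = ∅ := by
    apply Set.eq_empty_of_forall_notMem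
    intro x hx
    exact hx (H_mem ν x)
  rw [this]
  simp

/-! ### the image atoms of fmap μstar -/

def ImageAtoms : Set ℝ := {2} ∪ Set.range (fun j => sw j + 1) ∪ Set.range (fun j => -sw j - 1)

lemma ind_pre (ν : Measure ℝ) (y z : ℝ) :
    (H ν ⁻¹' {y}).indicator (1 : ℝ → ℝ≥0∞) z = if H ν z = y then 1 else 0 := by
  by_cases h : H ν z = y
  · rw [Set.indicator_of_mem (by simpa using h)]
    simp [h]
  · rw [Set.indicator_of_notMem (by simpa using h)]
    simp [h]

lemma fμstar_vanish {y : ℝ} (hy : y ∉ ImageAtoms) : fmap μstar {y} = 0 := by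
  rw [fmap_apply _ (measurableSet_singleton _)]
  rw [μstar_apply ((measurable_H μstar) (measurableSet_singleton _))]
  have h2 : ¬ (H μstar 2 = y) := by
    intro h; exact hy (Or.inl (Or.inl (by rw [← h, H_μstar_two]; rfl)))
  have hs : ∀ j, ¬ (H μstar (sw j) = y) := by
    intro j h; exact hy (Or.inl (Or.inr ⟨j, by rw [← h, H_μstar_sw]⟩))
  have hn : ∀ j, ¬ (H μstar (-sw j) = y) := by
    intro j h; exact hy (Or.inr ⟨j, by rw [← h, H_μstar_neg_sw]⟩)
  rw [ind_pre, if_neg h2, mul_zero]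
  have k1 : (∑' j, wk j * (H μstar ⁻¹' {y}).indicator 1 (sw j)) = 0 := by
    rw [ENNReal.tsum_eq_zero]; intro j; rw [ind_pre, if_neg (hs j), mul_zero]
  have k2 : (∑' j, wk j * (H μstar ⁻¹' {y}).indicator 1 (-sw j)) = 0 := by
    rw [ENNReal.tsum_eq_zero]; intro j; rw [ind_pre, if_neg (hn j), mul_zero]
  rw [k1, k2]
  simp

lemma fμstar_target_neg (N : ℕ) : fmap μstar {-sw N - 1} = wk N := by
  rw [fmap_apply _ (measurableSet_singleton _)]
  rw [μstar_apply ((measurable_H μstar) (measurableSet_singleton _))]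
  have h2 : ¬ (H μstar 2 = -sw N - 1) := by
    rw [H_μstar_two]; have := sw_pos N; intro h; linarith
  have hs : ∀ j, ¬ (H μstar (sw j) = -sw N - 1) := by
    intro j; rw [H_μstar_sw]
    have := sw_pos j; have := sw_pos N; intro h; linarith
  have hn : ∀ j, (H μstar (-sw j) = -sw N - 1) ↔ j = N := by
    intro j; rw [H_μstar_neg_sw]
    constructor
    · intro h
      have : sw j = sw N := by linarith
      exact sw_inj this
    · intro h; rw [h]
  rw [ind_pre, if_neg h2, mul_zero]
  have k1 : (∑' j, wk j * (H μstar ⁻¹' {-sw N - 1}).indicator 1 (sw j)) = 0 := by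
    rw [ENNReal.tsum_eq_zero]; intro j; rw [ind_pre, if_neg (hs j), mul_zero]
  have k2 : (∑' j, wk j * (H μstar ⁻¹' {-sw N - 1}).indicator 1 (-sw j)) = wk N := by
    rw [tsum_eq_single N]
    · rw [ind_pre, if_pos ((hn N).mpr rfl), mul_one]
    · intro b hb
      rw [ind_pre, if_neg (fun h => hb ((hn b).mp h)), mul_zero]
  rw [k1, k2]
  simp

lemma fμstar_target_pos (N : ℕ) : fmap μstar {sw N + 1} = wk N := by
  rw [fmap_apply _ (measurableSet_singleton _)]
  rw [μstar_apply ((measurable_H μstar) (measurableSet_singleton _))]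
  have h2 : ¬ (H μstar 2 = sw N + 1) := by
    rw [H_μstar_two]; have := sw_le_half N; intro h; linarith
  have hn : ∀ j, ¬ (H μstar (-sw j) = sw N + 1) := by
    intro j; rw [H_μstar_neg_sw]
    have := sw_pos j; have := sw_pos N; intro h; linarith
  have hs : ∀ j, (H μstar (sw j) = sw N + 1) ↔ j = N := by
    intro j; rw [H_μstar_sw]
    constructor
    · intro h
      have : sw j = sw N := by linarith
      exact sw_inj this
    · intro h; rw [h]
  rw [ind_pre, if_neg h2, mul_zero]
  have k1 : (∑' j, wk j * (H μstar ⁻¹' {sw N + 1}).indicator 1 (sw j)) = wk N := by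
    rw [tsum_eq_single N]
    · rw [ind_pre, if_pos ((hs N).mpr rfl), mul_one]
    · intro b hb
      rw [ind_pre, if_neg (fun h => hb ((hs b).mp h)), mul_zero]
  have k2 : (∑' j, wk j * (H μstar ⁻¹' {sw N + 1}).indicator 1 (-sw j)) = 0 := by
    rw [ENNReal.tsum_eq_zero]; intro j; rw [ind_pre, if_neg (hn j), mul_zero]
  rw [k1, k2]
  simp

lemma wk_lt_swt (N : ℕ) : wk N < swt := by
  unfold wk swt
  apply ENNReal.ofReal_lt_ofReal_iff_of_nonneg (by positivity) |>.mpr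
  have h1 : (4:ℝ)^(N+1) ≥ 4 := by
    calc (4:ℝ)^(N+1) ≥ 4^1 := pow_le_pow_right₀ (by norm_num) (by omega)
      _ = 4 := by norm_num
  have h2 : ((4:ℝ)^(N+1))⁻¹ ≤ 1/4 := by
    rw [inv_le_comm₀ (by positivity) (by norm_num)]
    linarith
  nlinarith

/-! ### no continuous in-context representation -/

lemma sw_le_pow (n : ℕ) : sw n ≤ (1/2:ℝ)^n := by
  unfold sw pw
  rw [← inv_pow]
  calc ((2:ℝ)⁻¹)^(n+1) ≤ (2⁻¹ : ℝ)^n := by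
        apply pow_le_pow_of_le_one (by norm_num) (by norm_num) (by omega)
    _ = (1/2:ℝ)^n := by norm_num
lemma exists_small {δ : ℝ} (hδ : 0 < δ) : ∃ N : ℕ, ∀ m, N ≤ m → sw m < δ := by
  obtain ⟨n, hn⟩ := exists_pow_lt_of_lt_one hδ (by norm_num : (1/2:ℝ) < 1)
  refine ⟨n, fun m hm => ?_⟩
  calc sw m ≤ sw n := sw_antitone hm
    _ ≤ (1/2:ℝ)^n := sw_le_pow n
    _ < δ := hn

theorem no_G :
    ¬ ∃ G : Measure ℝ → ℝ → ℝ,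
        (∀ μ ∈ ProbOn (Set.Icc (-3 : ℝ) 3), ∀ x ∈ Set.Icc (-3 : ℝ) 3,
          G μ x ∈ Set.Icc (-3 : ℝ) 3) ∧
        (∀ μ ∈ ProbOn (Set.Icc (-3 : ℝ) 3), ∀ x ∈ Set.Icc (-3 : ℝ) 3, ∀ ε > (0 : ℝ),
          ∃ δ > (0 : ℝ), ∀ ν ∈ ProbOn (Set.Icc (-3 : ℝ) 3), ∀ y ∈ Set.Icc (-3 : ℝ) 3,
            W1 μ ν + dist x y < δ → dist (G μ x) (G ν y) < ε) ∧
        (∀ μ ∈ ProbOn (Set.Icc (-3 : ℝ) 3), fmap μ = Measure.map (G μ) μ) := by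
  rintro ⟨G, -, hG2, hG3⟩
  have hmem : μstar ∈ ProbOn (Set.Icc (-3:ℝ) 3) := ⟨μstar_prob, μstar_compl_Icc⟩
  have hrepr := hG3 μstar hmem
  have hAE : AEMeasurable (G μstar) μstar := by
    by_contra h
    have h0 := Measure.map_of_not_aemeasurable h
    rw [h0] at hrepr
    have hfp : IsProbabilityMeasure (fmap μstar) := fmap_isProb μstar
    have h1 : fmap μstar Set.univ = 1 := hfp.measure_univ
    rw [hrepr] at h1
    simp at h1
  obtain ⟨δ₁, hδ₁pos, hδ₁⟩ := hG2 μstar hmem 0 (by norm_num) (1/4) (by norm_num)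
  obtain ⟨N, hN⟩ := exists_small hδ₁pos
  have hsmall : ∀ m, N ≤ m →
      dist (G μstar 0) (G μstar (sw m)) < 1/4
      ∧ dist (G μstar 0) (G μstar (-sw m)) < 1/4 := by
    intro m hm
    have hswlt := hN m hm
    have hspos := sw_pos m
    constructor
    · apply hδ₁ μstar hmem (sw m) (sw_mem_Icc m)
      rw [W1_self]
      rw [Real.dist_eq]
      rw [show |(0:ℝ) - sw m| = sw m by rw [abs_of_nonpos (by linarith)]; ring]
      linarith
    · apply hδ₁ μstar hmem (-sw m) (neg_sw_mem_Icc m)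
      rw [W1_self]
      rw [Real.dist_eq]
      rw [show |(0:ℝ) - -sw m| = sw m by rw [abs_of_nonneg (by linarith)]; ring]
      linarith
  have hEq : ∀ y : ℝ, fmap μstar {y} = μstar (G μstar ⁻¹' {y}) := by
    intro y
    rw [hrepr]
    exact Measure.map_apply_of_aemeasurable hAE (measurableSet_singleton _)
  have hlow : ∀ (z y : ℝ), G μstar z = y → μstar {z} ≤ fmap μstar {y} := by
    intro z y hz
    rw [hEq]
    apply measure_mono
    intro t ht
    rw [Set.mem_singleton_iff] at ht
    subst ht
    simpa using hz
  set c := G μstar 0 with hcdef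
  -- the final contradiction, by cases on the sign of c
  have key : ∀ y₀ : ℝ, fmap μstar {y₀} = wk N →
      (∀ m, N ≤ m → G μstar (sw m) ≠ y₀ ∧ G μstar (-sw m) ≠ y₀) → False := by
    intro y₀ hval hsm
    -- no atom is sent to y₀
    have hatoms : ∀ z ∈ Atoms, G μstar z ≠ y₀ := by
      intro z hz hGz
      have hle := hlow z y₀ hGz
      rw [hval] at hle
      rcases hz with (hz | hz) | hz
      · rw [Set.mem_singleton_iff] at hz
        subst hz
        rw [μstar_singleton_two] at hle
        exact absurd hle (not_le.mpr (wk_lt_swt N))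
      · obtain ⟨m, rfl⟩ := hz
        rcases Nat.lt_or_ge m N with hmN | hmN
        · rw [μstar_singleton_sw] at hle
          exact absurd hle (not_le.mpr (wk_lt m N hmN))
        · exact (hsm m hmN).1 hGz
      · obtain ⟨m, rfl⟩ := hz
        rcases Nat.lt_or_ge m N with hmN | hmN
        · rw [μstar_singleton_neg_sw] at hle
          exact absurd hle (not_le.mpr (wk_lt m N hmN))
        · exact (hsm m hmN).2 hGz
    have hsub : G μstar ⁻¹' {y₀} ⊆ Atomsᶜ := by
      intro t ht hta
      exact hatoms t hta (by simpa using ht)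
    have h0 : μstar (G μstar ⁻¹' {y₀}) = 0 :=
      le_antisymm (le_trans (measure_mono hsub) (le_of_eq μstar_compl_Atoms)) (by positivity)
    rw [← hEq, hval] at h0
    exact wk_ne_zero N h0
  rcases le_or_gt 0 c with hc | hc
  · -- c ≥ 0 : use the negative-side target
    apply key (-sw N - 1) (fμstar_target_neg N)
    intro m hm
    have hd := hsmall m hm
    have hswN := sw_pos N
    constructor
    · intro hGz
      have := hd.1
      rw [hGz, Real.dist_eq] at this
      rw [show c - (-sw N - 1) = c + sw N + 1 by ring] at this
      rw [abs_of_nonneg (by linarith)] at this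
      linarith
    · intro hGz
      have := hd.2
      rw [hGz, Real.dist_eq] at this
      rw [show c - (-sw N - 1) = c + sw N + 1 by ring] at this
      rw [abs_of_nonneg (by linarith)] at this
      linarith
  · -- c < 0 : use the positive-side target
    apply key (sw N + 1) (fμstar_target_pos N)
    intro m hm
    have hd := hsmall m hm
    have hswN := sw_pos N
    constructor
    · intro hGz
      have := hd.1
      rw [hGz, Real.dist_eq] at this
      rw [show c - (sw N + 1) = -(sw N + 1 - c) by ring, abs_neg] at this
      rw [abs_of_nonneg (by linarith)] at this
      linarith
    · intro hGz
      have := hd.2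
      rw [hGz, Real.dist_eq] at this
      rw [show c - (sw N + 1) = -(sw N + 1 - c) by ring, abs_neg] at this
      rw [abs_of_nonneg (by linarith)] at this
      linarith

/-! ### support preservation and ProbOn preservation -/

lemma map_finset_sum {ι : Type*} (s : Finset ι) {φ : ℝ → ℝ} (hφ : Measurable φ)
    (μs : ι → Measure ℝ) :
    Measure.map φ (∑ i ∈ s, μs i) = ∑ i ∈ s, Measure.map φ (μs i) := by
  classical
  induction s using Finset.cons_induction with
  | empty => simp
  | cons a s ha ih =>
      rw [Finset.sum_cons, Finset.sum_cons, Measure.map_add _ _ hφ, ih]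

lemma fmap_supportPreserving : SupportPreservingProb (Set.Icc (-3:ℝ) 3) fmap := by
  intro n hn x hx
  set μ := ∑ i : Fin n, ((n : ℝ≥0∞))⁻¹ • Measure.dirac (x i) with hμ
  refine ⟨fun i => H μ (x i), fun i => H_mem μ (x i), ?_, fun i j hij => by simp only []; rw [hij]⟩
  show Measure.map (H μ) μ = _
  rw [hμ, map_finset_sum _ (measurable_H μ)]
  apply Finset.sum_congr rfl
  intro i _
  rw [Measure.map_smul, Measure.map_dirac' (measurable_H _)]

lemma fmap_mem_ProbOn {ν : Measure ℝ} (hν : ν ∈ ProbOn (Set.Icc (-3:ℝ) 3)) :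
    fmap ν ∈ ProbOn (Set.Icc (-3:ℝ) 3) := by
  obtain ⟨hprob, hsupp⟩ := hν
  have : IsProbabilityMeasure ν := hprob
  exact ⟨fmap_isProb ν, fmap_compl_Icc ν⟩

/-! ### truncated displacement map HJ -/

noncomputable def HJ (J : ℕ) (ν : Measure ℝ) (x : ℝ) : ℝ :=
  cl3 (x + (∑ j ∈ Finset.range J, th j x * gP j ν)
    - (∑ j ∈ Finset.range J, th j (-x) * gM j ν))

lemma abs_HJ_le (J : ℕ) (ν : Measure ℝ) (x : ℝ) : |HJ J ν x| ≤ 3 := abs_cl3_le _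

lemma HJ_measurable (J : ℕ) (ν : Measure ℝ) : Measurable (HJ J ν) := by
  unfold HJ
  apply cl3_continuous.measurable.comp
  apply Measurable.sub
  · apply Measurable.add measurable_id
    apply Finset.measurable_sum
    intro j _
    exact ((th_continuous j).mul continuous_const).measurable
  · apply Finset.measurable_sum
    intro j _
    exact (((th_continuous j).comp continuous_neg).mul continuous_const).measurable

/-- Lipschitz constant of HJ in x -/
noncomputable def LJ (J : ℕ) : ℝ := 1 + ∑ j ∈ Finset.range J, 64 * pw j

lemma LJ_pos (J : ℕ) : 0 < LJ J := by
  unfold LJ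
  have : (0:ℝ) ≤ ∑ j ∈ Finset.range J, 64 * pw j :=
    Finset.sum_nonneg (fun j _ => by have := pw_pos j; positivity)
  linarith

lemma abs_HJ_sub (J : ℕ) (ν : Measure ℝ) (a b : ℝ) :
    |HJ J ν a - HJ J ν b| ≤ LJ J * |a - b| := by
  have key : |(a + (∑ j ∈ Finset.range J, th j a * gP j ν)
      - (∑ j ∈ Finset.range J, th j (-a) * gM j ν))
      - (b + (∑ j ∈ Finset.range J, th j b * gP j ν)
      - (∑ j ∈ Finset.range J, th j (-b) * gM j ν))| ≤ LJ J * |a - b| := by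
    have hP : |(∑ j ∈ Finset.range J, th j a * gP j ν)
        - (∑ j ∈ Finset.range J, th j b * gP j ν)|
        ≤ ∑ j ∈ Finset.range J, 32 * pw j * |a - b| := by
      rw [← Finset.sum_sub_distrib]
      refine (Finset.abs_sum_le_sum_abs _ _).trans ?_
      apply Finset.sum_le_sum
      intro j _
      rw [show th j a * gP j ν - th j b * gP j ν = (th j a - th j b) * gP j ν by ring,
        abs_mul]
      have h1 := abs_th_sub j a b
      have h2 := gP_le_one j ν
      have h3 := gP_nonneg j ν
      have h4 : |gP j ν| ≤ 1 := by rw [abs_of_nonneg h3]; exact h2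
      have h5 : (0:ℝ) ≤ |th j a - th j b| := abs_nonneg _
      nlinarith
    have hM : |(∑ j ∈ Finset.range J, th j (-a) * gM j ν)
        - (∑ j ∈ Finset.range J, th j (-b) * gM j ν)|
        ≤ ∑ j ∈ Finset.range J, 32 * pw j * |a - b| := by
      rw [← Finset.sum_sub_distrib]
      refine (Finset.abs_sum_le_sum_abs _ _).trans ?_
      apply Finset.sum_le_sum
      intro j _
      rw [show th j (-a) * gM j ν - th j (-b) * gM j ν
        = (th j (-a) - th j (-b)) * gM j ν by ring, abs_mul]
      have h1 := abs_th_sub j (-a) (-b)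
      rw [show |(-a) - (-b)| = |a - b| by rw [show (-a) - (-b) = -(a-b) by ring, abs_neg]]
        at h1
      have h2 := gM_le_one j ν
      have h3 := gM_nonneg j ν
      have h4 : |gM j ν| ≤ 1 := by rw [abs_of_nonneg h3]; exact h2
      have h5 : (0:ℝ) ≤ |th j (-a) - th j (-b)| := abs_nonneg _
      nlinarith
    have habs : ∀ u v w : ℝ, |u + v - w| ≤ |u| + |v| + |w| := by
      intro u v w
      calc |u + v - w| ≤ |u + v| + |w| := abs_sub _ _
        _ ≤ |u| + |v| + |w| := by have := abs_add_le u v; linarith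
    calc |(a + (∑ j ∈ Finset.range J, th j a * gP j ν)
        - (∑ j ∈ Finset.range J, th j (-a) * gM j ν))
        - (b + (∑ j ∈ Finset.range J, th j b * gP j ν)
        - (∑ j ∈ Finset.range J, th j (-b) * gM j ν))|
        = |(a - b) + ((∑ j ∈ Finset.range J, th j a * gP j ν)
          - (∑ j ∈ Finset.range J, th j b * gP j ν))
          - ((∑ j ∈ Finset.range J, th j (-a) * gM j ν)
          - (∑ j ∈ Finset.range J, th j (-b) * gM j ν))| := by ring_nf
      _ ≤ |a - b| + |(∑ j ∈ Finset.range J, th j a * gP j ν)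
          - (∑ j ∈ Finset.range J, th j b * gP j ν)|
          + |(∑ j ∈ Finset.range J, th j (-a) * gM j ν)
          - (∑ j ∈ Finset.range J, th j (-b) * gM j ν)| := habs _ _ _
      _ ≤ |a - b| + (∑ j ∈ Finset.range J, 32 * pw j * |a - b|)
          + (∑ j ∈ Finset.range J, 32 * pw j * |a - b|) := by linarith
      _ = (1 + ∑ j ∈ Finset.range J, 64 * pw j) * |a - b| := by
          rw [← Finset.sum_mul]
          have h64 : (∑ j ∈ Finset.range J, 64 * pw j)
              = 2 * ∑ j ∈ Finset.range J, 32 * pw j := by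
            rw [Finset.mul_sum]; apply Finset.sum_congr rfl; intro j _; ring
          rw [h64]; ring
      _ = LJ J * |a - b| := rfl
  exact (abs_cl3_sub _ _).trans key

/-! ### sensitivity of the zone decisions in the measure argument -/

lemma integral_Tf_eq (j : ℕ) (ν : Measure ℝ) :
    ∫ t, Tf j t ∂ν = (tP j ν).toReal := by
  rw [integral_eq_lintegral_of_nonneg_ae (Filter.Eventually.of_forall (Tf_nonneg j))
    (Tf_continuous j).aestronglyMeasurable]
  rfl

lemma integral_Tf_neg_eq (j : ℕ) (ν : Measure ℝ) :
    ∫ t, Tf j (-t) ∂ν = (tM j ν).toReal := by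
  rw [integral_eq_lintegral_of_nonneg_ae
    (Filter.Eventually.of_forall (fun t => Tf_nonneg j (-t)))
    ((Tf_continuous j).comp continuous_neg).aestronglyMeasurable]
  rfl

/-- sensitivity constant for one zone decision -/
noncomputable def CG (j : ℕ) : ℝ := (8/3) * 4^(j+1) * (8 * pw j)

lemma CG_pos (j : ℕ) : 0 < CG j := by
  unfold CG; have := pw_pos j; positivity

lemma abs_gP_diff {ν₁ ν₂ : Measure ℝ}
    (h₁ : IsProbabilityMeasure ν₁) (h₂ : IsProbabilityMeasure ν₂)
    (hc₁ : ν₁ (Set.Icc (-3:ℝ) 3)ᶜ = 0) (hc₂ : ν₂ (Set.Icc (-3:ℝ) 3)ᶜ = 0) (j : ℕ) :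
    |gP j ν₁ - gP j ν₂| ≤ CG j * W1 ν₁ ν₂ := by
  have hT : |(∫ t, Tf j t ∂ν₁) - ∫ t, Tf j t ∂ν₂| ≤ (8 * pw j) * W1 ν₁ ν₂ := by
    apply test_le_W1_scaled h₁ h₂ hc₁ hc₂ (K := 8 * pw j)
      (by have := pw_pos j; positivity)
    intro a b
    have := abs_Tf_sub j a b
    linarith
  rw [integral_Tf_eq, integral_Tf_eq] at hT
  have h1 : |gP j ν₁ - gP j ν₂| ≤ (8/3) * |rP j ν₁ - rP j ν₂| := abs_gfun_sub _ _
  have h2 : |rP j ν₁ - rP j ν₂|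
      = 4^(j+1) * |(tP j ν₁).toReal - (tP j ν₂).toReal| := by
    unfold rP
    rw [show (4:ℝ)^(j+1) * (tP j ν₁).toReal - 4^(j+1) * (tP j ν₂).toReal
      = 4^(j+1) * ((tP j ν₁).toReal - (tP j ν₂).toReal) by ring, abs_mul,
      abs_of_pos (by positivity : (0:ℝ) < 4^(j+1))]
  rw [h2] at h1
  calc |gP j ν₁ - gP j ν₂|
      ≤ (8/3) * (4^(j+1) * |(tP j ν₁).toReal - (tP j ν₂).toReal|) := h1
    _ ≤ (8/3) * (4^(j+1) * ((8 * pw j) * W1 ν₁ ν₂)) := by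
        have h4 : (0:ℝ) < 4^(j+1) := by positivity
        nlinarith
    _ = CG j * W1 ν₁ ν₂ := by unfold CG; ring

lemma abs_gM_diff {ν₁ ν₂ : Measure ℝ}
    (h₁ : IsProbabilityMeasure ν₁) (h₂ : IsProbabilityMeasure ν₂)
    (hc₁ : ν₁ (Set.Icc (-3:ℝ) 3)ᶜ = 0) (hc₂ : ν₂ (Set.Icc (-3:ℝ) 3)ᶜ = 0) (j : ℕ) :
    |gM j ν₁ - gM j ν₂| ≤ CG j * W1 ν₁ ν₂ := by
  have hT : |(∫ t, Tf j (-t) ∂ν₁) - ∫ t, Tf j (-t) ∂ν₂| ≤ (8 * pw j) * W1 ν₁ ν₂ := by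
    apply test_le_W1_scaled h₁ h₂ hc₁ hc₂ (K := 8 * pw j)
      (by have := pw_pos j; positivity)
    intro a b
    have h := abs_Tf_sub j (-a) (-b)
    rw [show |(-a) - (-b)| = |a - b| by rw [show (-a) - (-b) = -(a-b) by ring, abs_neg]] at h
    linarith
  rw [integral_Tf_neg_eq, integral_Tf_neg_eq] at hT
  have h1 : |gM j ν₁ - gM j ν₂| ≤ (8/3) * |rM j ν₁ - rM j ν₂| := abs_gfun_sub _ _
  have h2 : |rM j ν₁ - rM j ν₂|
      = 4^(j+1) * |(tM j ν₁).toReal - (tM j ν₂).toReal| := by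
    unfold rM
    rw [show (4:ℝ)^(j+1) * (tM j ν₁).toReal - 4^(j+1) * (tM j ν₂).toReal
      = 4^(j+1) * ((tM j ν₁).toReal - (tM j ν₂).toReal) by ring, abs_mul,
      abs_of_pos (by positivity : (0:ℝ) < 4^(j+1))]
  rw [h2] at h1
  calc |gM j ν₁ - gM j ν₂|
      ≤ (8/3) * (4^(j+1) * |(tM j ν₁).toReal - (tM j ν₂).toReal|) := h1
    _ ≤ (8/3) * (4^(j+1) * ((8 * pw j) * W1 ν₁ ν₂)) := by
        have h4 : (0:ℝ) < 4^(j+1) := by positivity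
        nlinarith
    _ = CG j * W1 ν₁ ν₂ := by unfold CG; ring

noncomputable def CJ (J : ℕ) : ℝ := ∑ j ∈ Finset.range J, 2 * CG j

lemma CJ_nonneg (J : ℕ) : 0 ≤ CJ J :=
  Finset.sum_nonneg (fun j _ => by have := CG_pos j; linarith)

lemma abs_HJ_measure_diff {ν₁ ν₂ : Measure ℝ}
    (h₁ : IsProbabilityMeasure ν₁) (h₂ : IsProbabilityMeasure ν₂)
    (hc₁ : ν₁ (Set.Icc (-3:ℝ) 3)ᶜ = 0) (hc₂ : ν₂ (Set.Icc (-3:ℝ) 3)ᶜ = 0)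
    (J : ℕ) (x : ℝ) :
    |HJ J ν₁ x - HJ J ν₂ x| ≤ CJ J * W1 ν₁ ν₂ := by
  have key : |(x + (∑ j ∈ Finset.range J, th j x * gP j ν₁)
      - (∑ j ∈ Finset.range J, th j (-x) * gM j ν₁))
      - (x + (∑ j ∈ Finset.range J, th j x * gP j ν₂)
      - (∑ j ∈ Finset.range J, th j (-x) * gM j ν₂))| ≤ CJ J * W1 ν₁ ν₂ := by
    have hP : |(∑ j ∈ Finset.range J, th j x * gP j ν₁)
        - (∑ j ∈ Finset.range J, th j x * gP j ν₂)|
        ≤ ∑ j ∈ Finset.range J, CG j * W1 ν₁ ν₂ := by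
      rw [← Finset.sum_sub_distrib]
      refine (Finset.abs_sum_le_sum_abs _ _).trans ?_
      apply Finset.sum_le_sum
      intro j _
      rw [show th j x * gP j ν₁ - th j x * gP j ν₂
        = th j x * (gP j ν₁ - gP j ν₂) by ring, abs_mul]
      have h1 := abs_gP_diff h₁ h₂ hc₁ hc₂ j
      have h2 := th_le_one j x
      have h3 := th_nonneg j x
      have h4 : |th j x| ≤ 1 := by rw [abs_of_nonneg h3]; exact h2
      have h5 : (0:ℝ) ≤ |gP j ν₁ - gP j ν₂| := abs_nonneg _
      nlinarith
    have hM : |(∑ j ∈ Finset.range J, th j (-x) * gM j ν₁)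
        - (∑ j ∈ Finset.range J, th j (-x) * gM j ν₂)|
        ≤ ∑ j ∈ Finset.range J, CG j * W1 ν₁ ν₂ := by
      rw [← Finset.sum_sub_distrib]
      refine (Finset.abs_sum_le_sum_abs _ _).trans ?_
      apply Finset.sum_le_sum
      intro j _
      rw [show th j (-x) * gM j ν₁ - th j (-x) * gM j ν₂
        = th j (-x) * (gM j ν₁ - gM j ν₂) by ring, abs_mul]
      have h1 := abs_gM_diff h₁ h₂ hc₁ hc₂ j
      have h2 := th_le_one j (-x)
      have h3 := th_nonneg j (-x)
      have h4 : |th j (-x)| ≤ 1 := by rw [abs_of_nonneg h3]; exact h2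
      have h5 : (0:ℝ) ≤ |gM j ν₁ - gM j ν₂| := abs_nonneg _
      nlinarith
    have habs : ∀ u v : ℝ, |u - v| ≤ |u| + |v| := fun u v => abs_sub _ _
    calc |(x + (∑ j ∈ Finset.range J, th j x * gP j ν₁)
        - (∑ j ∈ Finset.range J, th j (-x) * gM j ν₁))
        - (x + (∑ j ∈ Finset.range J, th j x * gP j ν₂)
        - (∑ j ∈ Finset.range J, th j (-x) * gM j ν₂))|
        = |((∑ j ∈ Finset.range J, th j x * gP j ν₁)
          - (∑ j ∈ Finset.range J, th j x * gP j ν₂))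
          - ((∑ j ∈ Finset.range J, th j (-x) * gM j ν₁)
          - (∑ j ∈ Finset.range J, th j (-x) * gM j ν₂))| := by ring_nf
      _ ≤ |(∑ j ∈ Finset.range J, th j x * gP j ν₁)
          - (∑ j ∈ Finset.range J, th j x * gP j ν₂)|
          + |(∑ j ∈ Finset.range J, th j (-x) * gM j ν₁)
          - (∑ j ∈ Finset.range J, th j (-x) * gM j ν₂)| := habs _ _
      _ ≤ (∑ j ∈ Finset.range J, CG j * W1 ν₁ ν₂)
          + (∑ j ∈ Finset.range J, CG j * W1 ν₁ ν₂) := by linarith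
      _ = CJ J * W1 ν₁ ν₂ := by
          unfold CJ
          rw [← Finset.sum_mul]
          have h2 : (∑ j ∈ Finset.range J, 2 * CG j)
              = 2 * ∑ j ∈ Finset.range J, CG j := by
            rw [Finset.mul_sum]
          rw [h2]; ring
  exact (abs_cl3_sub _ _).trans key

/-! ### the tail of the displacement beyond level J -/

noncomputable def TPtail (J : ℕ) (ν : Measure ℝ) (x : ℝ) : ℝ≥0∞ :=
  ∑' k, ENNReal.ofReal (th (J+k) x * gP (J+k) ν)
noncomputable def TMtail (J : ℕ) (ν : Measure ℝ) (x : ℝ) : ℝ≥0∞ :=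
  ∑' k, ENNReal.ofReal (th (J+k) (-x) * gM (J+k) ν)

lemma tail_le_one_aux {c : ℕ → ℝ} (hc0 : ∀ j, 0 ≤ c j) (hc1 : ∀ j, c j ≤ 1)
    (J : ℕ) (y : ℝ) : (∑' k, ENNReal.ofReal (th (J+k) y * c (J+k))) ≤ 1 := by
  by_cases h : ∀ k, th (J+k) y = 0
  · rw [ENNReal.tsum_eq_zero.mpr (fun k => by rw [h k, zero_mul, ENNReal.ofReal_zero])]
    exact zero_le_one
  · push_neg at h
    obtain ⟨k₀, hk₀⟩ := h
    rw [tsum_eq_single k₀ (fun b hb => ?_)]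
    · rw [show (1:ℝ≥0∞) = ENNReal.ofReal 1 by simp]
      apply ENNReal.ofReal_le_ofReal
      have h1 := th_le_one (J+k₀) y
      have h2 := th_nonneg (J+k₀) y
      have h3 := hc1 (J+k₀)
      have h4 := hc0 (J+k₀)
      nlinarith
    · rcases eq_or_ne (th (J+b) y) 0 with h0 | h0
      · rw [h0, zero_mul, ENNReal.ofReal_zero]
      · exact absurd (Nat.add_left_cancel (th_single h0 hk₀)) hb

lemma TPtail_le_one (J : ℕ) (ν : Measure ℝ) (x : ℝ) : TPtail J ν x ≤ 1 :=
  tail_le_one_aux (fun j => gP_nonneg j ν) (fun j => gP_le_one j ν) J x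
lemma TMtail_le_one (J : ℕ) (ν : Measure ℝ) (x : ℝ) : TMtail J ν x ≤ 1 :=
  tail_le_one_aux (fun j => gM_nonneg j ν) (fun j => gM_le_one j ν) J (-x)

lemma TPtail_ne_top (J : ℕ) (ν : Measure ℝ) (x : ℝ) : TPtail J ν x ≠ ⊤ :=
  (lt_of_le_of_lt (TPtail_le_one J ν x) (by simp)).ne
lemma TMtail_ne_top (J : ℕ) (ν : Measure ℝ) (x : ℝ) : TMtail J ν x ≠ ⊤ :=
  (lt_of_le_of_lt (TMtail_le_one J ν x) (by simp)).ne

/-- pointwise: the partial sum differs from the full displacement by at most the tail -/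
lemma DPE_sub_partial (ν : Measure ℝ) (x : ℝ) (J : ℕ) :
    |(DPE ν x).toReal - (∑ j ∈ Finset.range J, th j x * gP j ν)|
      ≤ (TPtail J ν x).toReal := by
  by_cases h : ∀ j, th j x = 0
  · rw [DPE_eq_zero h, Finset.sum_eq_zero (fun j _ => by rw [h j, zero_mul])]
    simp [ENNReal.toReal_nonneg]
  · push_neg at h
    obtain ⟨j₀, hj₀⟩ := h
    have hv0 : 0 ≤ th j₀ x * gP j₀ ν :=
      mul_nonneg (th_nonneg _ _) (gP_nonneg _ _)
    have hDPE : (DPE ν x).toReal = th j₀ x * gP j₀ ν := by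
      rw [DPE_single hj₀, ENNReal.toReal_ofReal hv0]
    rcases Nat.lt_or_ge j₀ J with hJ | hJ
    · have hSP : (∑ j ∈ Finset.range J, th j x * gP j ν) = th j₀ x * gP j₀ ν := by
        apply Finset.sum_eq_single j₀
        · intro b _ hb
          rcases eq_or_ne (th b x) 0 with h0 | h0
          · rw [h0, zero_mul]
          · exact absurd (th_single h0 hj₀) hb
        · intro hmem
          exact absurd (Finset.mem_range.mpr hJ) hmem
      rw [hDPE, hSP]
      simp [ENNReal.toReal_nonneg]
    · have hSP : (∑ j ∈ Finset.range J, th j x * gP j ν) = 0 := by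
        apply Finset.sum_eq_zero
        intro b hb
        rcases eq_or_ne (th b x) 0 with h0 | h0
        · rw [h0, zero_mul]
        · have := th_single h0 hj₀
          have hbJ := Finset.mem_range.mp hb
          omega
      rw [hDPE, hSP, sub_zero, abs_of_nonneg hv0]
      have hle : ENNReal.ofReal (th j₀ x * gP j₀ ν) ≤ TPtail J ν x := by
        have harr : J + (j₀ - J) = j₀ := by omega
        calc ENNReal.ofReal (th j₀ x * gP j₀ ν)
            = ENNReal.ofReal (th (J + (j₀ - J)) x * gP (J + (j₀ - J)) ν) := by rw [harr]
          _ ≤ TPtail J ν x := ENNReal.le_tsum _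
      calc th j₀ x * gP j₀ ν
          = (ENNReal.ofReal (th j₀ x * gP j₀ ν)).toReal := by
            rw [ENNReal.toReal_ofReal hv0]
        _ ≤ (TPtail J ν x).toReal := ENNReal.toReal_mono (TPtail_ne_top J ν x) hle

lemma DME_sub_partial (ν : Measure ℝ) (x : ℝ) (J : ℕ) :
    |(DME ν x).toReal - (∑ j ∈ Finset.range J, th j (-x) * gM j ν)|
      ≤ (TMtail J ν x).toReal := by
  by_cases h : ∀ j, th j (-x) = 0
  · rw [DME_eq_zero h, Finset.sum_eq_zero (fun j _ => by rw [h j, zero_mul])]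
    simp [ENNReal.toReal_nonneg]
  · push_neg at h
    obtain ⟨j₀, hj₀⟩ := h
    have hv0 : 0 ≤ th j₀ (-x) * gM j₀ ν :=
      mul_nonneg (th_nonneg _ _) (gM_nonneg _ _)
    have hDME : (DME ν x).toReal = th j₀ (-x) * gM j₀ ν := by
      rw [DME_single hj₀, ENNReal.toReal_ofReal hv0]
    rcases Nat.lt_or_ge j₀ J with hJ | hJ
    · have hSP : (∑ j ∈ Finset.range J, th j (-x) * gM j ν) = th j₀ (-x) * gM j₀ ν := by
        apply Finset.sum_eq_single j₀
        · intro b _ hb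
          rcases eq_or_ne (th b (-x)) 0 with h0 | h0
          · rw [h0, zero_mul]
          · exact absurd (th_single h0 hj₀) hb
        · intro hmem
          exact absurd (Finset.mem_range.mpr hJ) hmem
      rw [hDME, hSP]
      simp [ENNReal.toReal_nonneg]
    · have hSP : (∑ j ∈ Finset.range J, th j (-x) * gM j ν) = 0 := by
        apply Finset.sum_eq_zero
        intro b hb
        rcases eq_or_ne (th b (-x)) 0 with h0 | h0
        · rw [h0, zero_mul]
        · have := th_single h0 hj₀
          have hbJ := Finset.mem_range.mp hb
          omega
      rw [hDME, hSP, sub_zero, abs_of_nonneg hv0]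
      have hle : ENNReal.ofReal (th j₀ (-x) * gM j₀ ν) ≤ TMtail J ν x := by
        have harr : J + (j₀ - J) = j₀ := by omega
        calc ENNReal.ofReal (th j₀ (-x) * gM j₀ ν)
            = ENNReal.ofReal (th (J + (j₀ - J)) (-x) * gM (J + (j₀ - J)) ν) := by rw [harr]
          _ ≤ TMtail J ν x := ENNReal.le_tsum _
      calc th j₀ (-x) * gM j₀ ν
          = (ENNReal.ofReal (th j₀ (-x) * gM j₀ ν)).toReal := by
            rw [ENNReal.toReal_ofReal hv0]
        _ ≤ (TMtail J ν x).toReal := ENNReal.toReal_mono (TMtail_ne_top J ν x) hle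

lemma H_sub_HJ (ν : Measure ℝ) (x : ℝ) (J : ℕ) :
    ENNReal.ofReal |H ν x - HJ J ν x| ≤ TPtail J ν x + TMtail J ν x := by
  have h1 : |H ν x - HJ J ν x|
      ≤ |(DPE ν x).toReal - (∑ j ∈ Finset.range J, th j x * gP j ν)|
        + |(DME ν x).toReal - (∑ j ∈ Finset.range J, th j (-x) * gM j ν)| := by
    refine (abs_cl3_sub _ _).trans ?_
    rw [show (x + (DPE ν x).toReal - (DME ν x).toReal)
        - (x + (∑ j ∈ Finset.range J, th j x * gP j ν)
          - (∑ j ∈ Finset.range J, th j (-x) * gM j ν))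
      = ((DPE ν x).toReal - (∑ j ∈ Finset.range J, th j x * gP j ν))
        - ((DME ν x).toReal - (∑ j ∈ Finset.range J, th j (-x) * gM j ν)) by ring]
    exact abs_sub _ _
  have h2 := DPE_sub_partial ν x J
  have h3 := DME_sub_partial ν x J
  calc ENNReal.ofReal |H ν x - HJ J ν x|
      ≤ ENNReal.ofReal ((TPtail J ν x).toReal + (TMtail J ν x).toReal) :=
        ENNReal.ofReal_le_ofReal (by linarith)
    _ ≤ ENNReal.ofReal ((TPtail J ν x).toReal) + ENNReal.ofReal ((TMtail J ν x).toReal) :=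
        ENNReal.ofReal_add_le
    _ = TPtail J ν x + TMtail J ν x := by
        rw [ENNReal.ofReal_toReal (TPtail_ne_top J ν x),
          ENNReal.ofReal_toReal (TMtail_ne_top J ν x)]

/-! ### integral bound on the tails -/

lemma tP_le_one {ν : Measure ℝ} [IsProbabilityMeasure ν] (j : ℕ) : tP j ν ≤ 1 := by
  unfold tP
  calc ∫⁻ t, ENNReal.ofReal (Tf j t) ∂ν ≤ ∫⁻ _t, 1 ∂ν :=
        lintegral_mono (fun t => ENNReal.ofReal_le_one.mpr (Tf_le_one j t))
    _ = 1 := by simp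
lemma tM_le_one {ν : Measure ℝ} [IsProbabilityMeasure ν] (j : ℕ) : tM j ν ≤ 1 := by
  unfold tM
  calc ∫⁻ t, ENNReal.ofReal (Tf j (-t)) ∂ν ≤ ∫⁻ _t, 1 ∂ν :=
        lintegral_mono (fun t => ENNReal.ofReal_le_one.mpr (Tf_le_one j (-t)))
    _ = 1 := by simp
lemma tP_ne_top {ν : Measure ℝ} [IsProbabilityMeasure ν] (j : ℕ) : tP j ν ≠ ⊤ :=
  (lt_of_le_of_lt (tP_le_one j) (by simp)).ne
lemma tM_ne_top {ν : Measure ℝ} [IsProbabilityMeasure ν] (j : ℕ) : tM j ν ≠ ⊤ :=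
  (lt_of_le_of_lt (tM_le_one j) (by simp)).ne

lemma lint_term_P (m : ℕ) (ν : Measure ℝ) [IsProbabilityMeasure ν] :
    ∫⁻ x, ENNReal.ofReal (th m x * gP m ν) ∂ν
      ≤ ENNReal.ofReal ((3/4) * ((4:ℝ)^(m+1))⁻¹) := by
  have hfe : (fun x => ENNReal.ofReal (th m x * gP m ν))
      = fun x => ENNReal.ofReal (gP m ν) * ENNReal.ofReal (th m x) := by
    funext x
    rw [mul_comm, ENNReal.ofReal_mul (gP_nonneg m ν)]
  rw [hfe, lintegral_const_mul _ ((th_continuous m).measurable.ennreal_ofReal)]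
  rcases le_or_gt (3/4) (rP m ν) with hr | hr
  · have : gP m ν = 0 := gfun_eq_zero hr
    rw [this]
    simp
  · have htTH : (∫⁻ x, ENNReal.ofReal (th m x) ∂ν) ≤ tP m ν := by
      unfold tP
      exact lintegral_mono (fun t => ENNReal.ofReal_le_ofReal (th_le_Tf m t))
    have htoReal : (tP m ν).toReal < (3/4) * ((4:ℝ)^(m+1))⁻¹ := by
      unfold rP at hr
      have h4 : (0:ℝ) < 4^(m+1) := by positivity
      rw [show (3/4) * ((4:ℝ)^(m+1))⁻¹ = (3/4) / 4^(m+1) by ring, lt_div_iff₀ h4]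
      nlinarith
    have htP : tP m ν ≤ ENNReal.ofReal ((3/4) * ((4:ℝ)^(m+1))⁻¹) := by
      rw [← ENNReal.ofReal_toReal (tP_ne_top m)]
      exact ENNReal.ofReal_le_ofReal htoReal.le
    calc ENNReal.ofReal (gP m ν) * (∫⁻ x, ENNReal.ofReal (th m x) ∂ν)
        ≤ 1 * tP m ν :=
          mul_le_mul' (ENNReal.ofReal_le_one.mpr (gP_le_one m ν)) htTH
      _ = tP m ν := one_mul _
      _ ≤ _ := htP

lemma lint_term_M (m : ℕ) (ν : Measure ℝ) [IsProbabilityMeasure ν] :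
    ∫⁻ x, ENNReal.ofReal (th m (-x) * gM m ν) ∂ν
      ≤ ENNReal.ofReal ((3/4) * ((4:ℝ)^(m+1))⁻¹) := by
  have hfe : (fun x => ENNReal.ofReal (th m (-x) * gM m ν))
      = fun x => ENNReal.ofReal (gM m ν) * ENNReal.ofReal (th m (-x)) := by
    funext x
    rw [mul_comm, ENNReal.ofReal_mul (gM_nonneg m ν)]
  have hmeas : Measurable fun x : ℝ => ENNReal.ofReal (th m (-x)) :=
    (((th_continuous m).comp continuous_neg).measurable).ennreal_ofReal
  rw [hfe, lintegral_const_mul _ hmeas]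
  rcases le_or_gt (3/4) (rM m ν) with hr | hr
  · have : gM m ν = 0 := gfun_eq_zero hr
    rw [this]
    simp
  · have htTH : (∫⁻ x, ENNReal.ofReal (th m (-x)) ∂ν) ≤ tM m ν := by
      unfold tM
      exact lintegral_mono (fun t => ENNReal.ofReal_le_ofReal (th_le_Tf m (-t)))
    have htoReal : (tM m ν).toReal < (3/4) * ((4:ℝ)^(m+1))⁻¹ := by
      unfold rM at hr
      have h4 : (0:ℝ) < 4^(m+1) := by positivity
      rw [show (3/4) * ((4:ℝ)^(m+1))⁻¹ = (3/4) / 4^(m+1) by ring, lt_div_iff₀ h4]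
      nlinarith
    have htM : tM m ν ≤ ENNReal.ofReal ((3/4) * ((4:ℝ)^(m+1))⁻¹) := by
      rw [← ENNReal.ofReal_toReal (tM_ne_top m)]
      exact ENNReal.ofReal_le_ofReal htoReal.le
    calc ENNReal.ofReal (gM m ν) * (∫⁻ x, ENNReal.ofReal (th m (-x)) ∂ν)
        ≤ 1 * tM m ν :=
          mul_le_mul' (ENNReal.ofReal_le_one.mpr (gM_le_one m ν)) htTH
      _ = tM m ν := one_mul _
      _ ≤ _ := htM

lemma tsum_tail_bound (J : ℕ) :
    (∑' k : ℕ, ENNReal.ofReal ((3/4) * ((4:ℝ)^(J+k+1))⁻¹))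
      = ENNReal.ofReal (((4:ℝ)^(J+1))⁻¹) := by
  have hsummable : Summable (fun k : ℕ => (3/4) * ((4:ℝ)^(J+k+1))⁻¹) := by
    have hfe : (fun k : ℕ => (3/4) * ((4:ℝ)^(J+k+1))⁻¹)
        = fun k : ℕ => ((3/4) * ((4:ℝ)^(J+1))⁻¹) * (1/4)^k := by
      funext k
      rw [show J+k+1 = (J+1)+k by omega, pow_add, mul_inv]
      rw [show ((4:ℝ)^k)⁻¹ = (1/4)^k by rw [← inv_pow]; norm_num]
      ring
    rw [hfe]
    exact (summable_geometric_of_lt_one (by norm_num) (by norm_num)).mul_left _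
  rw [← ENNReal.ofReal_tsum_of_nonneg (fun k => by positivity) hsummable]
  congr 1
  have hfe : (fun k : ℕ => (3/4) * ((4:ℝ)^(J+k+1))⁻¹)
      = fun k : ℕ => ((3/4) * ((4:ℝ)^(J+1))⁻¹) * (1/4)^k := by
    funext k
    rw [show J+k+1 = (J+1)+k by omega, pow_add, mul_inv]
    rw [show ((4:ℝ)^k)⁻¹ = (1/4)^k by rw [← inv_pow]; norm_num]
    ring
  rw [hfe, tsum_mul_left, tsum_geometric_of_lt_one (by norm_num) (by norm_num)]
  rw [show ((1:ℝ) - 1/4)⁻¹ = 4/3 by norm_num]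
  ring

lemma lint_TPtail (J : ℕ) (ν : Measure ℝ) [IsProbabilityMeasure ν] :
    ∫⁻ x, TPtail J ν x ∂ν ≤ ENNReal.ofReal (((4:ℝ)^(J+1))⁻¹) := by
  unfold TPtail
  rw [lintegral_tsum (f := fun k x => ENNReal.ofReal (th (J+k) x * gP (J+k) ν)) (fun k =>
    (((th_continuous (J+k)).mul continuous_const).measurable.ennreal_ofReal).aemeasurable)]
  rw [← tsum_tail_bound J]
  exact ENNReal.tsum_le_tsum (fun k => lint_term_P (J+k) ν)

lemma lint_TMtail (J : ℕ) (ν : Measure ℝ) [IsProbabilityMeasure ν] :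
    ∫⁻ x, TMtail J ν x ∂ν ≤ ENNReal.ofReal (((4:ℝ)^(J+1))⁻¹) := by
  unfold TMtail
  have hmeas : ∀ k : ℕ, AEMeasurable (fun x : ℝ =>
      ENNReal.ofReal (th (J+k) (-x) * gM (J+k) ν)) ν := fun k =>
    ((((th_continuous (J+k)).comp continuous_neg).mul
      continuous_const).measurable.ennreal_ofReal).aemeasurable
  rw [lintegral_tsum hmeas]
  rw [← tsum_tail_bound J]
  exact ENNReal.tsum_le_tsum (fun k => lint_term_M (J+k) ν)

/-! ### the tail estimate on integrals -/

lemma measurable_TPtail (J : ℕ) (ν : Measure ℝ) : Measurable (fun x => TPtail J ν x) := by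
  unfold TPtail
  apply Measurable.ennreal_tsum
  intro k
  exact ((th_continuous (J+k)).mul continuous_const).measurable.ennreal_ofReal

lemma measurable_TMtail (J : ℕ) (ν : Measure ℝ) : Measurable (fun x => TMtail J ν x) := by
  unfold TMtail
  apply Measurable.ennreal_tsum
  intro k
  exact (((th_continuous (J+k)).comp continuous_neg).mul
    continuous_const).measurable.ennreal_ofReal

lemma phi_comp_integrable {ν : Measure ℝ} [IsProbabilityMeasure ν]
    {φ : ℝ → ℝ} (hφ : LipschitzWith 1 φ) {Ψ : ℝ → ℝ} (hΨm : Measurable Ψ)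
    (hΨb : ∀ x, |Ψ x| ≤ 3) : Integrable (fun x => φ (Ψ x)) ν := by
  apply integrable_of_bdd (hφ.continuous.measurable.comp hΨm).aestronglyMeasurable
    (C := |φ 0| + 3)
  apply Filter.Eventually.of_forall
  intro x
  simp only [Function.comp_apply]
  have h1 : |φ (Ψ x) - φ 0| ≤ 1 * |Ψ x - 0| := lip_abs hφ _ 0
  have := abs_sub_abs_le_abs_sub (φ (Ψ x)) (φ 0)
  have h2 := hΨb x
  simp only [sub_zero, one_mul] at h1
  linarith

lemma tail_integral_le (J : ℕ) {ν : Measure ℝ} [IsProbabilityMeasure ν]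
    {φ : ℝ → ℝ} (hφ : LipschitzWith 1 φ) :
    |(∫ x, φ (H ν x) ∂ν) - ∫ x, φ (HJ J ν x) ∂ν| ≤ 2 * ((4:ℝ)^(J+1))⁻¹ := by
  have hint1 : Integrable (fun x => φ (H ν x)) ν :=
    phi_comp_integrable hφ (measurable_H ν) (abs_H_le ν)
  have hint2 : Integrable (fun x => φ (HJ J ν x)) ν :=
    phi_comp_integrable hφ (HJ_measurable J ν) (abs_HJ_le J ν)
  rw [← integral_sub hint1 hint2]
  rw [show |∫ x, (φ (H ν x) - φ (HJ J ν x)) ∂ν|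
    = ‖∫ x, (φ (H ν x) - φ (HJ J ν x)) ∂ν‖ by rw [Real.norm_eq_abs]]
  refine (norm_integral_le_lintegral_norm _).trans ?_
  have hbound : ∫⁻ x, ENNReal.ofReal ‖φ (H ν x) - φ (HJ J ν x)‖ ∂ν
      ≤ ENNReal.ofReal (2 * ((4:ℝ)^(J+1))⁻¹) := by
    have hpt : ∀ x, ENNReal.ofReal ‖φ (H ν x) - φ (HJ J ν x)‖
        ≤ TPtail J ν x + TMtail J ν x := by
      intro x
      refine le_trans ?_ (H_sub_HJ ν x J)
      apply ENNReal.ofReal_le_ofReal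
      rw [Real.norm_eq_abs]
      have := lip_abs hφ (H ν x) (HJ J ν x)
      simpa using this
    calc ∫⁻ x, ENNReal.ofReal ‖φ (H ν x) - φ (HJ J ν x)‖ ∂ν
        ≤ ∫⁻ x, (TPtail J ν x + TMtail J ν x) ∂ν := lintegral_mono hpt
      _ = (∫⁻ x, TPtail J ν x ∂ν) + ∫⁻ x, TMtail J ν x ∂ν :=
          lintegral_add_left (measurable_TPtail J ν) _
      _ ≤ ENNReal.ofReal (((4:ℝ)^(J+1))⁻¹) + ENNReal.ofReal (((4:ℝ)^(J+1))⁻¹) :=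
          add_le_add (lint_TPtail J ν) (lint_TMtail J ν)
      _ = ENNReal.ofReal (2 * ((4:ℝ)^(J+1))⁻¹) := by
          rw [← ENNReal.ofReal_add (by positivity) (by positivity)]
          congr 1
          ring
  calc (∫⁻ x, ENNReal.ofReal ‖φ (H ν x) - φ (HJ J ν x)‖ ∂ν).toReal
      ≤ (ENNReal.ofReal (2 * ((4:ℝ)^(J+1))⁻¹)).toReal :=
        ENNReal.toReal_mono ENNReal.ofReal_ne_top hbound
    _ = 2 * ((4:ℝ)^(J+1))⁻¹ := ENNReal.toReal_ofReal (by positivity)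

/-- difference of integrals of two uniformly-close bounded functions -/
lemma integral_diff_le_of_bound {ν : Measure ℝ} [IsProbabilityMeasure ν]
    {u v : ℝ → ℝ} (hu : Integrable u ν) (hv : Integrable v ν)
    {C : ℝ} (h : ∀ x, |u x - v x| ≤ C) :
    |(∫ x, u x ∂ν) - ∫ x, v x ∂ν| ≤ C := by
  rw [← integral_sub hu hv]
  rw [show |∫ x, (u x - v x) ∂ν| = ‖∫ x, (u x - v x) ∂ν‖ by rw [Real.norm_eq_abs]]
  calc ‖∫ x, (u x - v x) ∂ν‖ ≤ ∫ _x, C ∂ν := by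
        apply norm_integral_le_of_norm_le (integrable_const C)
        apply Filter.Eventually.of_forall
        intro x
        rw [Real.norm_eq_abs]
        exact h x
    _ = C := by simp

/-! ### the continuity of fmap in W1 -/

lemma fmap_continuity :
    ∀ ε > (0:ℝ), ∃ δ > (0:ℝ), ∀ ν₁ ν₂ : Measure ℝ,
      ν₁ ∈ ProbOn (Set.Icc (-3:ℝ) 3) → ν₂ ∈ ProbOn (Set.Icc (-3:ℝ) 3) →
      W1 ν₁ ν₂ < δ → W1 (fmap ν₁) (fmap ν₂) < ε := by
  intro ε hε
  obtain ⟨J, hJ⟩ := exists_pow_lt_of_lt_one (show (0:ℝ) < ε/8 by linarith)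
    (show (1/4:ℝ) < 1 by norm_num)
  have hτ : 2*(2 * ((4:ℝ)^(J+1))⁻¹) = (1/4:ℝ)^J := by
    rw [pow_succ]
    rw [show ((1:ℝ)/4)^J = ((4:ℝ)^J)⁻¹ by rw [← inv_pow]; norm_num]
    have h4 : ((4:ℝ)^J) ≠ 0 := by positivity
    field_simp
    ring
  set K := LJ J + CJ J with hK
  have hKpos : 0 < K := by
    have := LJ_pos J
    have := CJ_nonneg J
    rw [hK]; linarith
  refine ⟨(ε/4) / K, by positivity, ?_⟩
  intro ν₁ ν₂ h₁ h₂ hW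
  obtain ⟨hp₁, hc₁⟩ := h₁
  obtain ⟨hp₂, hc₂⟩ := h₂
  have hW0 : 0 ≤ W1 ν₁ ν₂ := W1_nonneg hp₁ hp₂ hc₁ hc₂
  have key : ∀ φ : ℝ → ℝ, LipschitzWith 1 φ →
      (∫ x, φ x ∂(fmap ν₁)) - ∫ x, φ x ∂(fmap ν₂)
        ≤ (1/4:ℝ)^J + K * W1 ν₁ ν₂ := by
    intro φ hφ
    have hmap1 : ∫ x, φ x ∂(fmap ν₁) = ∫ x, φ (H ν₁ x) ∂ν₁ :=
      integral_map (measurable_H ν₁).aemeasurable hφ.continuous.aestronglyMeasurable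
    have hmap2 : ∫ x, φ x ∂(fmap ν₂) = ∫ x, φ (H ν₂ x) ∂ν₂ :=
      integral_map (measurable_H ν₂).aemeasurable hφ.continuous.aestronglyMeasurable
    rw [hmap1, hmap2]
    have T1 := tail_integral_le J (ν := ν₁) hφ
    have T4 := tail_integral_le J (ν := ν₂) hφ
    have T2 : |(∫ x, φ (HJ J ν₁ x) ∂ν₁) - ∫ x, φ (HJ J ν₁ x) ∂ν₂|
        ≤ LJ J * W1 ν₁ ν₂ := by
      apply test_le_W1_scaled hp₁ hp₂ hc₁ hc₂ (LJ_pos J)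
      intro a b
      have h1 := lip_abs hφ (HJ J ν₁ a) (HJ J ν₁ b)
      have h2 := abs_HJ_sub J ν₁ a b
      rw [NNReal.coe_one, one_mul] at h1
      linarith
    have T3 : |(∫ x, φ (HJ J ν₁ x) ∂ν₂) - ∫ x, φ (HJ J ν₂ x) ∂ν₂|
        ≤ CJ J * W1 ν₁ ν₂ := by
      apply integral_diff_le_of_bound
        (phi_comp_integrable hφ (HJ_measurable J ν₁) (abs_HJ_le J ν₁))
        (phi_comp_integrable hφ (HJ_measurable J ν₂) (abs_HJ_le J ν₂))
      intro x
      have h1 := lip_abs hφ (HJ J ν₁ x) (HJ J ν₂ x)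
      have h2 := abs_HJ_measure_diff hp₁ hp₂ hc₁ hc₂ J x
      rw [NNReal.coe_one, one_mul] at h1
      linarith
    rw [abs_le] at T1 T2 T3 T4
    rw [hK]
    have := T1.1
    have := T1.2
    have := T2.1
    have := T2.2
    have := T3.1
    have := T3.2
    have := T4.1
    have := T4.2
    rw [← hτ]
    linarith
  have hnonneg : (0:ℝ) ≤ (1/4:ℝ)^J + K * W1 ν₁ ν₂ := by positivity
  have hfin : W1 (fmap ν₁) (fmap ν₂) ≤ (1/4:ℝ)^J + K * W1 ν₁ ν₂ :=
    W1_le_of_forall hnonneg key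
  have hKW : K * W1 ν₁ ν₂ < ε / 4 := by
    calc K * W1 ν₁ ν₂ < K * ((ε/4) / K) := by
          apply mul_lt_mul_of_pos_left hW hKpos
      _ = ε / 4 := by field_simp
  calc W1 (fmap ν₁) (fmap ν₂) ≤ (1/4:ℝ)^J + K * W1 ν₁ ν₂ := hfin
    _ < ε/8 + ε/4 := by linarith
    _ < ε := by linarith

end W1Proof

/-- On `Ω = [-3,3] ⊆ ℝ` there exists a support-preserving map
`f : P(Ω) → P(Ω)` that is continuous in the 1-Wasserstein topology, but which is not of the
form `f(μ) = G(μ,·)_♯ μ` for any continuous in-context map `G : P(Ω) × Ω → Ω`. -/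
theorem exists_supportPreserving_not_inContext :
    ∃ f : Measure ℝ → Measure ℝ,
      (∀ μ ∈ ProbOn (Set.Icc (-3 : ℝ) 3), f μ ∈ ProbOn (Set.Icc (-3 : ℝ) 3)) ∧
      (∀ μ ∈ ProbOn (Set.Icc (-3 : ℝ) 3), ∀ ε > (0 : ℝ), ∃ δ > (0 : ℝ),
        ∀ ν ∈ ProbOn (Set.Icc (-3 : ℝ) 3), W1 μ ν < δ → W1 (f μ) (f ν) < ε) ∧
      SupportPreservingProb (Set.Icc (-3 : ℝ) 3) f ∧
      ¬ ∃ G : Measure ℝ → ℝ → ℝ,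
          (∀ μ ∈ ProbOn (Set.Icc (-3 : ℝ) 3), ∀ x ∈ Set.Icc (-3 : ℝ) 3,
            G μ x ∈ Set.Icc (-3 : ℝ) 3) ∧
          (∀ μ ∈ ProbOn (Set.Icc (-3 : ℝ) 3), ∀ x ∈ Set.Icc (-3 : ℝ) 3, ∀ ε > (0 : ℝ),
            ∃ δ > (0 : ℝ), ∀ ν ∈ ProbOn (Set.Icc (-3 : ℝ) 3), ∀ y ∈ Set.Icc (-3 : ℝ) 3,
              W1 μ ν + dist x y < δ → dist (G μ x) (G ν y) < ε) ∧
          (∀ μ ∈ ProbOn (Set.Icc (-3 : ℝ) 3), f μ = Measure.map (G μ) μ) := by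
  
  refine ⟨W1Proof.fmap, ?_, ?_, ?_, ?_⟩
  · intro μ hμ
    exact W1Proof.fmap_mem_ProbOn hμ
  · intro μ hμ ε hε
    obtain ⟨δ, hδpos, hδ⟩ := W1Proof.fmap_continuity ε hε
    exact ⟨δ, hδpos, fun ν hν hW => hδ μ ν hμ hν hW⟩
  · exact W1Proof.fmap_supportPreserving
  · exact W1Proof.no_G
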